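/- arXiv:1605.08098 — 2 statements merged into one kernel-verified Lean document; each statement's English description precedes it below -/
import Mathlib

section
/- Every frame template Φ=(Γ,C,X,Y₀,Y₁,A₁,Δ,Λ) over a finite field is equivalent (Φ∼Φ', i.e., M_w(Φ)=M_w(Φ')) to a frame template Φ' in standard form. -/
open Matroid Set

namespace TemplatePaper

variable {α β γ : Type*}

/-- Matroid isomorphism. -/
def MIso (M : Matroid α) (N : Matroid β) : Prop :=
  ∃ f : α → β, Set.BijOn f M.E N.E ∧ ∀ I ⊆ M.E, (M.Indep I ↔ N.Indep (f '' I))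

/-- `N` is the contraction `M ／ K`. -/
def IsContraction (N M : Matroid α) (K : Set α) : Prop :=
  N.E = M.E \ K ∧
    ∀ I : Set α, N.Indep I ↔
      (I ⊆ M.E \ K ∧ ∃ J, M.IsBasis J (K ∩ M.E) ∧ M.Indep (I ∪ J))

/-- `N` is a minor of `M` (obtained by a contraction followed by a deletion). -/
def MinorOf (N M : Matroid α) : Prop :=
  ∃ (N₁ : Matroid α) (K D : Set α), IsContraction N₁ M K ∧ N = N₁ ↾ (N₁.E \ D)

/-- `M` has a minor isomorphic to `P`. -/
def HasIsoMinor (M : Matroid α) (P : Matroid β) : Prop :=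
  ∃ N : Matroid α, MinorOf N M ∧ MIso P N

/-- A simple matroid: every subset of the ground set with at most two elements
is independent. -/
def IsSimple (M : Matroid α) : Prop :=
  ∀ I ⊆ M.E, I.ncard ≤ 2 → M.Indep I

/-- The rank of a set in a matroid (as a natural number; intended for finite matroids). -/
noncomputable def rkOf (M : Matroid α) (X : Set α) : ℕ :=
  sSup {n | ∃ I, I ⊆ X ∧ M.Indep I ∧ I.ncard = n}

/-- The rank of a matroid. -/
noncomputable def rk (M : Matroid α) : ℕ := rkOf M M.E

/-- A matroid is vertically `k`-connected if for every partition `(X, Y)` of the ground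
set with `r(X) + r(Y) - r(M) < k - 1`, either `X` or `Y` is spanning. -/
def VertConn (M : Matroid α) (k : ℕ) : Prop :=
  ∀ X Y : Set α, X ∪ Y = M.E → Disjoint X Y →
    (rkOf M X : ℤ) + (rkOf M Y : ℤ) - (rk M : ℤ) < (k : ℤ) - 1 →
    M.Spanning X ∨ M.Spanning Y

/-- `M` is represented (on its ground set) by the matrix `A` over `F`:
independence in `M` coincides with linear independence of the corresponding columns. -/
def IsRepBy (F : Type*) [Field F] (M : Matroid α) (A : β → α → F) : Prop :=
  ∀ I ⊆ M.E, (M.Indep I ↔ LinearIndependent F (fun e : I => fun b => A b (e : α)))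

/-- A binary matroid: a matroid representable over `GF(2)`. -/
def IsBinary (M : Matroid α) : Prop :=
  ∃ (m : ℕ) (A : Fin m → α → ZMod 2), IsRepBy (ZMod 2) M A

/-- A graphic matroid: the cycle matroid of a graph.  Equivalently (as is standard for
binary matroids, and as used in the paper), a matroid representable over `GF(2)` by a
matrix in which every column has at most two nonzero entries. -/
def IsGraphic (M : Matroid α) : Prop :=
  ∃ (m : ℕ) (A : Fin m → α → ZMod 2),
    IsRepBy (ZMod 2) M A ∧ ∀ e ∈ M.E, {i | A i e ≠ 0}.ncard ≤ 2

/-- A cographic matroid: the dual of a graphic matroid. -/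
def IsCographic (M : Matroid α) : Prop := IsGraphic M✶

/-- `G` is (isomorphic to) the binary projective geometry `PG(m-1, 2)`:
its ground set is in bijection with the nonzero vectors of `GF(2)^m`, with independence
given by linear independence. -/
def IsPG (m : ℕ) (G : Matroid γ) : Prop :=
  ∃ f : γ → (Fin m → ZMod 2),
    Set.BijOn f G.E {v | v ≠ 0} ∧
    ∀ I ⊆ G.E, (G.Indep I ↔ LinearIndependent (ZMod 2) (fun e : I => f (e : γ)))

/-- The set of sizes of simple rank-`≤ r` matroids in a class `𝓜`; the growth rate
function of `𝓜` at `r` is the greatest element of this set. -/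
def sizesOfRank (𝓜 : Set (Matroid ℕ)) (r : ℕ) : Set ℕ :=
  {n | ∃ M ∈ 𝓜, M.E.Finite ∧ IsSimple M ∧ rk M ≤ r ∧ M.E.ncard = n}

/-- The growth rate function of `𝓜` agrees with `f` for all but finitely many `r`. -/
def GrowthRateEventually (𝓜 : Set (Matroid ℕ)) (f : ℕ → ℕ) : Prop :=
  ∃ N : ℕ, ∀ r ≥ N, IsGreatest (sizesOfRank 𝓜 r) (f r)

/-- A minor-closed class of matroids (closed under minors and isomorphism). -/
def MinorClosed (𝓜 : Set (Matroid ℕ)) : Prop :=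
  (∀ M ∈ 𝓜, ∀ N : Matroid ℕ, MinorOf N M → N ∈ 𝓜) ∧
  (∀ M ∈ 𝓜, ∀ N : Matroid ℕ, MIso N M → N ∈ 𝓜)

/-- The class of binary matroids with no minor isomorphic to `P`. -/
def EX (P : Matroid β) : Set (Matroid ℕ) :=
  {M | M.E.Finite ∧ IsBinary M ∧ ¬HasIsoMinor M P}

/-- The subgroup of `F^ℕ` of all vectors supported on the finite set `S`
(used to encode subgroups of `F^S` for varying index sets `S`). -/
def fullOn (F : Type*) [Field F] (S : Finset ℕ) : AddSubgroup (ℕ → F) where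
  carrier := {v | ∀ i ∉ S, v i = 0}
  add_mem' := by
    intro a b ha hb i hi
    simp [Pi.add_apply, ha i hi, hb i hi]
  zero_mem' := by intro i _; rfl
  neg_mem' := by
    intro a ha i hi
    simp [Pi.neg_apply, ha i hi]

/-- Restriction of a vector to the coordinates in `S` (zero elsewhere); used to encode
the projection of a subgroup of `F^T` into `F^S`. -/
def maskOn {F : Type*} [Field F] (S : Finset ℕ) (v : ℕ → F) : ℕ → F :=
  fun i => if i ∈ S then v i else 0

/-- A frame template over `F`.  The disjoint finite sets `C, X, Y₀, Y₁` are encoded as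
disjoint finite subsets of `ℕ`; the matrix `A₁ ∈ F^{X × (C ∪ Y₀ ∪ Y₁)}` is encoded as a
function `ℕ → ℕ → F` supported on `X × (C ∪ Y₀ ∪ Y₁)`; the subgroups
`Λ ≤ F^X` and `Δ ≤ F^{C ∪ Y₀ ∪ Y₁}` are encoded as subgroups of `F^ℕ` of vectors
supported on the relevant sets, closed under scaling by elements of `Γ`. -/
structure FrameTemplate (F : Type) [Field F] where
  Γ : Subgroup Fˣ
  C : Finset ℕ
  X : Finset ℕ
  Y0 : Finset ℕ
  Y1 : Finset ℕ
  disj : List.Pairwise Disjoint [C, X, Y0, Y1]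
  A1 : ℕ → ℕ → F
  A1_supp : ∀ i j, A1 i j ≠ 0 → i ∈ X ∧ j ∈ C ∪ Y0 ∪ Y1
  Δ : AddSubgroup (ℕ → F)
  Δ_supp : ∀ v ∈ Δ, ∀ j ∉ C ∪ Y0 ∪ Y1, v j = 0
  Δ_smul : ∀ γ ∈ Γ, ∀ v ∈ Δ, (γ : F) • v ∈ Δ
  Λ : AddSubgroup (ℕ → F)
  Λ_supp : ∀ v ∈ Λ, ∀ i ∉ X, v i = 0
  Λ_smul : ∀ γ ∈ Γ, ∀ v ∈ Λ, (γ : F) • v ∈ Λ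

namespace FrameTemplate

variable {F : Type} [Field F]

/-- The column index set `C ∪ Y₀ ∪ Y₁` of `A₁`. -/
def CY (Φ : FrameTemplate F) : Finset ℕ := Φ.C ∪ Φ.Y0 ∪ Φ.Y1

end FrameTemplate

section Columns

variable {F : Type} [Field F]

/-- A column that is zero on the rows in `S`. -/
def IsZeroColOn (S : Set ℕ) (v : ℕ → F) : Prop := ∀ b ∈ S, v b = 0

/-- A unit column on the rows in `S`. -/
def IsUnitColOn (S : Set ℕ) (v : ℕ → F) : Prop :=
  ∃ b ∈ S, v b = 1 ∧ ∀ b' ∈ S, b' ≠ b → v b' = 0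

/-- A column of a `Γ`-frame matrix (restricted to the rows in `S`): at most two nonzero
entries, a nonzero column contains a `1`, and a second nonzero entry equals `-γ` for
some `γ ∈ Γ`. -/
def IsFrameColOn (Γ : Subgroup Fˣ) (S : Set ℕ) (v : ℕ → F) : Prop :=
  IsZeroColOn S v ∨ IsUnitColOn S v ∨
    ∃ b₁ ∈ S, ∃ b₂ ∈ S, b₁ ≠ b₂ ∧ v b₁ = 1 ∧ (∃ γ ∈ Γ, v b₂ = -(γ : F)) ∧
      ∀ b ∈ S, b ≠ b₁ → b ≠ b₂ → v b = 0

end Columns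

namespace FrameTemplate

variable {F : Type} [Field F]

/-- A matrix `A'` (with row set `B` and column set `E`, encoded as a function `ℕ → ℕ → F`
supported on `B × E`) respects the template `Φ`, with `Z ⊆ E` as the distinguished set of
columns, and with the columns of `A'[B - X, Z]` required to satisfy `zcol`.
Taking `zcol` to be "unit column" gives `Respects`; allowing zero columns as well gives
`VRespects` (virtually respects). -/
def RespectsWith (zcol : Set ℕ → (ℕ → F) → Prop) (Φ : FrameTemplate F)
    (B E Z : Finset ℕ) (A' : ℕ → ℕ → F) : Prop :=
  Φ.X ⊆ B ∧ Φ.CY ⊆ E ∧ Z ⊆ E ∧ Disjoint Z Φ.CY ∧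
  (∀ i j, A' i j ≠ 0 → i ∈ B ∧ j ∈ E) ∧
  (∀ i ∈ Φ.X, ∀ j ∈ Φ.CY, A' i j = Φ.A1 i j) ∧
  (∀ i ∈ Φ.X, ∀ j ∈ Z, A' i j = 0) ∧
  (∀ j ∈ Z, zcol (↑B \ ↑Φ.X : Set ℕ) (fun i => A' i j)) ∧
  (∀ j ∈ E, j ∉ Φ.CY → j ∉ Z →
    IsFrameColOn Φ.Γ (↑B \ ↑Φ.X : Set ℕ) (fun i => A' i j)) ∧
  (∀ j ∈ E, j ∉ Φ.CY → j ∉ Z → maskOn Φ.X (fun i => A' i j) ∈ Φ.Λ) ∧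
  (∀ i ∈ B, i ∉ Φ.X → maskOn Φ.CY (fun j => A' i j) ∈ Φ.Δ)

/-- `A'` respects `Φ`. -/
def Respects (Φ : FrameTemplate F) (B E Z : Finset ℕ) (A' : ℕ → ℕ → F) : Prop :=
  RespectsWith (fun S v => IsUnitColOn S v) Φ B E Z A'

/-- `A'` virtually respects `Φ` (columns of `A'[B - X, Z]` may be unit or zero). -/
def VRespects (Φ : FrameTemplate F) (B E Z : Finset ℕ) (A' : ℕ → ℕ → F) : Prop :=
  RespectsWith (fun S v => IsZeroColOn S v ∨ IsUnitColOn S v) Φ B E Z A'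

/-- `A` is constructed from `A'`: they agree outside the `Z`-columns, and each
`Z`-column of `A` is the corresponding column of `A'` plus some `Y₁`-column of `A'`. -/
def BuiltFrom (Φ : FrameTemplate F) (Z : Finset ℕ) (A' A : ℕ → ℕ → F) : Prop :=
  (∀ j ∉ Z, ∀ i, A i j = A' i j) ∧
  (∀ j ∈ Z, ∃ y ∈ Φ.Y1, ∀ i, A i j = A' i j + A' i y)

end FrameTemplate

/-- `N` is the column (vector) matroid of the matrix `A` (rows indexed by `β`),
with ground set `E`. -/
def IsColMatroidOf {β : Type*} {F : Type} [Field F] (N : Matroid ℕ) (E : Finset ℕ)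
    (A : β → ℕ → F) : Prop :=
  N.E = ↑E ∧ ∀ I : Set ℕ,
    (N.Indep I ↔ I ⊆ ↑E ∧ LinearIndependent F (fun e : I => fun i => A i (e : ℕ)))

namespace FrameTemplate

variable {F : Type} [Field F]

/-- `M` conforms to `Φ` (with the respecting condition given by `resp`): `M` is isomorphic
to `M(A) ／ C ＼ Y₁` for a matrix `A` built from a matrix `A'` satisfying `resp`. -/
def ConformsWith (resp : FrameTemplate F → Finset ℕ → Finset ℕ → Finset ℕ →
      (ℕ → ℕ → F) → Prop) (M : Matroid α) (Φ : FrameTemplate F) : Prop :=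
  ∃ (B E Z : Finset ℕ) (A' A : ℕ → ℕ → F) (N N₁ : Matroid ℕ),
    resp Φ B E Z A' ∧ Φ.BuiltFrom Z A' A ∧ IsColMatroidOf N E A ∧
    IsContraction N₁ N ↑Φ.C ∧ MIso M (N₁ ↾ (N₁.E \ ↑Φ.Y1))

/-- `M` conforms to `Φ`. -/
def Conforms (M : Matroid α) (Φ : FrameTemplate F) : Prop :=
  ConformsWith (fun Φ B E Z A' => Φ.Respects B E Z A') M Φ

/-- `M` virtually conforms to `Φ`. -/
def VConforms (M : Matroid α) (Φ : FrameTemplate F) : Prop :=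
  ConformsWith (fun Φ B E Z A' => Φ.VRespects B E Z A') M Φ

end FrameTemplate

namespace FrameTemplate

variable {F : Type} [Field F]

/-- Operation (1): replace `Γ` with a proper subgroup. -/
def Op1 (Φ Φ' : FrameTemplate F) : Prop :=
  Φ'.Γ < Φ.Γ ∧ Φ'.C = Φ.C ∧ Φ'.X = Φ.X ∧ Φ'.Y0 = Φ.Y0 ∧ Φ'.Y1 = Φ.Y1 ∧
    Φ'.A1 = Φ.A1 ∧ Φ'.Δ = Φ.Δ ∧ Φ'.Λ = Φ.Λ

/-- Operation (2): replace `Λ` with a proper subgroup (closed under scaling by `Γ`). -/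
def Op2 (Φ Φ' : FrameTemplate F) : Prop :=
  Φ'.Γ = Φ.Γ ∧ Φ'.C = Φ.C ∧ Φ'.X = Φ.X ∧ Φ'.Y0 = Φ.Y0 ∧ Φ'.Y1 = Φ.Y1 ∧
    Φ'.A1 = Φ.A1 ∧ Φ'.Δ = Φ.Δ ∧ Φ'.Λ < Φ.Λ

/-- Operation (3): replace `Δ` with a proper subgroup (closed under scaling by `Γ`). -/
def Op3 (Φ Φ' : FrameTemplate F) : Prop :=
  Φ'.Γ = Φ.Γ ∧ Φ'.C = Φ.C ∧ Φ'.X = Φ.X ∧ Φ'.Y0 = Φ.Y0 ∧ Φ'.Y1 = Φ.Y1 ∧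
    Φ'.A1 = Φ.A1 ∧ Φ'.Δ < Φ.Δ ∧ Φ'.Λ = Φ.Λ

/-- Operation (4): remove an element `y` from `Y₁`. -/
def Op4 (Φ Φ' : FrameTemplate F) : Prop :=
  ∃ y ∈ Φ.Y1, Φ'.Γ = Φ.Γ ∧ Φ'.C = Φ.C ∧ Φ'.X = Φ.X ∧ Φ'.Y0 = Φ.Y0 ∧
    Φ'.Y1 = Φ.Y1.erase y ∧
    Φ'.A1 = (fun i j => if j = y then 0 else Φ.A1 i j) ∧
    (Φ'.Δ : Set (ℕ → F)) = maskOn Φ'.CY '' ↑Φ.Δ ∧ Φ'.Λ = Φ.Λ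

/-- An elementary row operation on the rows indexed by `X`. -/
def ElemRowOp (X : Finset ℕ) (e : (ℕ → F) → (ℕ → F)) : Prop :=
  (∃ x₁ ∈ X, ∃ x₂ ∈ X, x₁ ≠ x₂ ∧ e = fun v => v ∘ Equiv.swap x₁ x₂) ∨
  (∃ x ∈ X, ∃ c : F, c ≠ 0 ∧ e = fun v i => if i = x then c * v i else v i) ∨
  (∃ x₁ ∈ X, ∃ x₂ ∈ X, x₁ ≠ x₂ ∧
    ∃ c : F, e = fun v i => if i = x₂ then v i + c * v x₁ else v i)

/-- Operation (5): perform an elementary row operation on the `X`-rows of every matrix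
respecting `Φ`; this alters `A₁` and performs a change of basis on `Λ`. -/
def Op5 (Φ Φ' : FrameTemplate F) : Prop :=
  ∃ e, ElemRowOp Φ.X e ∧
    Φ'.Γ = Φ.Γ ∧ Φ'.C = Φ.C ∧ Φ'.X = Φ.X ∧ Φ'.Y0 = Φ.Y0 ∧ Φ'.Y1 = Φ.Y1 ∧
    Φ'.A1 = (fun i j => e (fun i' => Φ.A1 i' j) i) ∧
    Φ'.Δ = Φ.Δ ∧ (Φ'.Λ : Set (ℕ → F)) = e '' ↑Φ.Λ

/-- Operation (6): remove an element `x ∈ X` whose row is zero in every matrix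
respecting `Φ`. -/
def Op6 (Φ Φ' : FrameTemplate F) : Prop :=
  ∃ x ∈ Φ.X, (∀ B E Z A', Φ.Respects B E Z A' → ∀ j, A' x j = 0) ∧
    Φ'.Γ = Φ.Γ ∧ Φ'.C = Φ.C ∧ Φ'.X = Φ.X.erase x ∧ Φ'.Y0 = Φ.Y0 ∧ Φ'.Y1 = Φ.Y1 ∧
    Φ'.A1 = (fun i j => if i = x then 0 else Φ.A1 i j) ∧
    Φ'.Δ = Φ.Δ ∧ (Φ'.Λ : Set (ℕ → F)) = maskOn (Φ.X.erase x) '' ↑Φ.Λ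

/-- Operation (7): contract an element `c ∈ C` whose `A₁`-column is a unit column with
its nonzero entry in row `x`, where `λ_x = 0` for all `λ ∈ Λ` or `δ_c = 0` for all
`δ ∈ Δ`; remove `c` from `C` and `x` from `X`. -/
def Op7 (Φ Φ' : FrameTemplate F) : Prop :=
  ∃ c ∈ Φ.C, ∃ x ∈ Φ.X,
    Φ.A1 x c = 1 ∧ (∀ i, i ≠ x → Φ.A1 i c = 0) ∧
    ((∀ v ∈ Φ.Λ, v x = 0) ∨ (∀ v ∈ Φ.Δ, v c = 0)) ∧
    Φ'.Γ = Φ.Γ ∧ Φ'.C = Φ.C.erase c ∧ Φ'.X = Φ.X.erase x ∧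
    Φ'.Y0 = Φ.Y0 ∧ Φ'.Y1 = Φ.Y1 ∧
    Φ'.A1 = (fun i j => if i = x ∨ j = c then 0 else Φ.A1 i j) ∧
    (Φ'.Λ : Set (ℕ → F)) = maskOn (Φ.X.erase x) '' ↑Φ.Λ ∧
    (Φ'.Δ : Set (ℕ → F)) =
      maskOn Φ'.CY '' ((fun v : ℕ → F => v - v c • Φ.A1 x) '' ↑Φ.Δ)

/-- Operation (8): remove an element `c ∈ C` whose `A₁`-column is zero and with
`δ_c = 0` for all `δ ∈ Δ`. -/
def Op8 (Φ Φ' : FrameTemplate F) : Prop :=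
  ∃ c ∈ Φ.C, (∀ i, Φ.A1 i c = 0) ∧ (∀ v ∈ Φ.Δ, v c = 0) ∧
    Φ'.Γ = Φ.Γ ∧ Φ'.C = Φ.C.erase c ∧ Φ'.X = Φ.X ∧ Φ'.Y0 = Φ.Y0 ∧ Φ'.Y1 = Φ.Y1 ∧
    Φ'.A1 = Φ.A1 ∧ (Φ'.Δ : Set (ℕ → F)) = maskOn Φ'.CY '' ↑Φ.Δ ∧ Φ'.Λ = Φ.Λ

/-- Operation (10): remove an element `y` from `Y₀` (deleting `y` from every matroid
conforming to `Φ`). -/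
def Op10 (Φ Φ' : FrameTemplate F) : Prop :=
  ∃ y ∈ Φ.Y0, Φ'.Γ = Φ.Γ ∧ Φ'.C = Φ.C ∧ Φ'.X = Φ.X ∧ Φ'.Y0 = Φ.Y0.erase y ∧
    Φ'.Y1 = Φ.Y1 ∧
    Φ'.A1 = (fun i j => if j = y then 0 else Φ.A1 i j) ∧
    (Φ'.Δ : Set (ℕ → F)) = maskOn Φ'.CY '' ↑Φ.Δ ∧ Φ'.Λ = Φ.Λ

/-- Operation (11): for `x ∈ X` with `λ_x = 0` for every `λ ∈ Λ` and `y ∈ Y₀` whose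
`A₁`-column is (after row operations, which are available as operation (5)) a unit
column with nonzero entry in row `x`, contract `y` from every matroid conforming
to `Φ`. -/
def Op11 (Φ Φ' : FrameTemplate F) : Prop :=
  ∃ y ∈ Φ.Y0, ∃ x ∈ Φ.X,
    (∀ v ∈ Φ.Λ, v x = 0) ∧ Φ.A1 x y = 1 ∧ (∀ i, i ≠ x → Φ.A1 i y = 0) ∧
    Φ'.Γ = Φ.Γ ∧ Φ'.C = Φ.C ∧ Φ'.X = Φ.X.erase x ∧ Φ'.Y0 = Φ.Y0.erase y ∧
    Φ'.Y1 = Φ.Y1 ∧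
    Φ'.A1 = (fun i j => if i = x ∨ j = y then 0 else Φ.A1 i j) ∧
    (Φ'.Λ : Set (ℕ → F)) = maskOn (Φ.X.erase x) '' ↑Φ.Λ ∧
    (Φ'.Δ : Set (ℕ → F)) =
      maskOn Φ'.CY '' ((fun v : ℕ → F => v - v y • Φ.A1 x) '' ↑Φ.Δ)

/-- Operation (12): for `y ∈ Y₀` with `δ_y = 0` for every `δ ∈ Δ`, contract `y` from
every matroid conforming to `Φ`.  If the `A₁`-column of `y` is zero this just removes
`y`; otherwise (after row operations, available as operation (5)) the column of `y` is a
unit column with nonzero entry in some row `x`, which is removed together with `y`. -/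
def Op12 (Φ Φ' : FrameTemplate F) : Prop :=
  ∃ y ∈ Φ.Y0, (∀ v ∈ Φ.Δ, v y = 0) ∧
    (((∀ i, Φ.A1 i y = 0) ∧
      Φ'.Γ = Φ.Γ ∧ Φ'.C = Φ.C ∧ Φ'.X = Φ.X ∧ Φ'.Y0 = Φ.Y0.erase y ∧ Φ'.Y1 = Φ.Y1 ∧
      Φ'.A1 = Φ.A1 ∧ (Φ'.Δ : Set (ℕ → F)) = maskOn Φ'.CY '' ↑Φ.Δ ∧ Φ'.Λ = Φ.Λ) ∨
    (∃ x ∈ Φ.X, Φ.A1 x y = 1 ∧ (∀ i, i ≠ x → Φ.A1 i y = 0) ∧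
      Φ'.Γ = Φ.Γ ∧ Φ'.C = Φ.C ∧ Φ'.X = Φ.X.erase x ∧ Φ'.Y0 = Φ.Y0.erase y ∧
      Φ'.Y1 = Φ.Y1 ∧
      Φ'.A1 = (fun i j => if i = x ∨ j = y then 0 else Φ.A1 i j) ∧
      (Φ'.Λ : Set (ℕ → F)) = maskOn (Φ.X.erase x) '' ↑Φ.Λ ∧
      (Φ'.Δ : Set (ℕ → F)) = maskOn Φ'.CY '' ↑Φ.Δ))

/-- A single template operation, from Proposition 3.2 ((1)–(8)) and
Definition 3.3 ((10)–(12)). -/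
def Step (Φ Φ' : FrameTemplate F) : Prop :=
  Op1 Φ Φ' ∨ Op2 Φ Φ' ∨ Op3 Φ Φ' ∨ Op4 Φ Φ' ∨ Op5 Φ Φ' ∨ Op6 Φ Φ' ∨ Op7 Φ Φ' ∨
    Op8 Φ Φ' ∨ Op10 Φ Φ' ∨ Op11 Φ Φ' ∨ Op12 Φ Φ'

/-- `Φ'` is a template minor of `Φ`: it is obtained from `Φ` by repeatedly performing
the operations (1)-(8) and (10)-(12). -/
def IsTemplateMinor (Φ' Φ : FrameTemplate F) : Prop :=
  Relation.ReflTransGen Step Φ Φ'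

/-- `M` weakly conforms to `Φ`: `M` virtually conforms to some template minor of `Φ`. -/
def WConforms (M : Matroid α) (Φ : FrameTemplate F) : Prop :=
  ∃ Φ'', IsTemplateMinor Φ'' Φ ∧ VConforms M Φ''

/-- The preorder on templates: `Φ ⪯ Φ'` iff every matroid weakly conforming to `Φ`
weakly conforms to `Φ'`, i.e. `𝓜_w(Φ) ⊆ 𝓜_w(Φ')`. -/
def Preceq (Φ Φ' : FrameTemplate F) : Prop :=
  ∀ (α : Type) (M : Matroid α), WConforms M Φ → WConforms M Φ'

/-- Equivalence of templates: `𝓜_w(Φ) = 𝓜_w(Φ')`. -/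
def TEquiv (Φ Φ' : FrameTemplate F) : Prop :=
  ∀ (α : Type) (M : Matroid α), WConforms M Φ ↔ WConforms M Φ'

/-- A binary frame template: a frame template over `GF(2)` with `Γ` trivial. -/
def IsBinaryT (Φ : FrameTemplate (ZMod 2)) : Prop := Φ.Γ = ⊥

end FrameTemplate

namespace FrameTemplate

lemma bot_smul_mem {F : Type} [Field F] (G : AddSubgroup (ℕ → F)) :
    ∀ γ ∈ (⊥ : Subgroup Fˣ), ∀ v ∈ G, (γ : F) • v ∈ G := by
  intro γ hγ v hv
  rw [Subgroup.mem_bot] at hγ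
  subst hγ
  simpa using hv

lemma bot_supp {F : Type} [Field F] (S : Finset ℕ) :
    ∀ v ∈ (⊥ : AddSubgroup (ℕ → F)), ∀ i ∉ S, v i = 0 := by
  intro v hv i _
  rw [AddSubgroup.mem_bot] at hv
  simp [hv]

lemma fullOn_supp {F : Type} [Field F] (S : Finset ℕ) :
    ∀ v ∈ fullOn F S, ∀ i ∉ S, v i = 0 := fun _ hv => hv

/-- The trivial template `Φ₀`: all groups trivial and all sets empty. -/
def Phi0 : FrameTemplate (ZMod 2) where
  Γ := ⊥
  C := ∅
  X := ∅
  Y0 := ∅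
  Y1 := ∅
  disj := by simp
  A1 := fun _ _ => 0
  A1_supp := by intro i j h; exact absurd rfl h
  Δ := ⊥
  Δ_supp := bot_supp _
  Δ_smul := bot_smul_mem _
  Λ := ⊥
  Λ_supp := bot_supp _
  Λ_smul := bot_smul_mem _

/-- The template `Φ_C`: all groups trivial and all sets empty except `|C| = 1` and
`Δ ≅ ℤ/2ℤ`. -/
def PhiC : FrameTemplate (ZMod 2) where
  Γ := ⊥
  C := {0}
  X := ∅
  Y0 := ∅
  Y1 := ∅
  disj := by simp
  A1 := fun _ _ => 0
  A1_supp := by intro i j h; exact absurd rfl h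
  Δ := fullOn (ZMod 2) {0}
  Δ_supp := by simpa using fullOn_supp (F := ZMod 2) {0}
  Δ_smul := bot_smul_mem _
  Λ := ⊥
  Λ_supp := bot_supp _
  Λ_smul := bot_smul_mem _

/-- The template `Φ_X`: all groups trivial and all sets empty except `|X| = 1` and
`Λ ≅ ℤ/2ℤ`. -/
def PhiX : FrameTemplate (ZMod 2) where
  Γ := ⊥
  C := ∅
  X := {0}
  Y0 := ∅
  Y1 := ∅
  disj := by simp
  A1 := fun _ _ => 0
  A1_supp := by intro i j h; exact absurd rfl h
  Δ := ⊥
  Δ_supp := bot_supp _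
  Δ_smul := bot_smul_mem _
  Λ := fullOn (ZMod 2) {0}
  Λ_supp := fullOn_supp _
  Λ_smul := bot_smul_mem _

/-- The template `Φ_{Y₀}`: all groups trivial and all sets empty except `|Y₀| = 1` and
`Δ ≅ ℤ/2ℤ`. -/
def PhiY0 : FrameTemplate (ZMod 2) where
  Γ := ⊥
  C := ∅
  X := ∅
  Y0 := {0}
  Y1 := ∅
  disj := by simp
  A1 := fun _ _ => 0
  A1_supp := by intro i j h; exact absurd rfl h
  Δ := fullOn (ZMod 2) {0}
  Δ_supp := by simpa using fullOn_supp (F := ZMod 2) {0}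
  Δ_smul := bot_smul_mem _
  Λ := ⊥
  Λ_supp := bot_supp _
  Λ_smul := bot_smul_mem _

/-- The template `Φ_{CX}`: `Y₀ = Y₁ = ∅`, `|C| = |X| = 1`, `Δ ≅ Λ ≅ ℤ/2ℤ`, `Γ` trivial,
and `A₁ = [1]`. -/
def PhiCX : FrameTemplate (ZMod 2) where
  Γ := ⊥
  C := {0}
  X := {1}
  Y0 := ∅
  Y1 := ∅
  disj := by simp
  A1 := fun i j => if i = 1 ∧ j = 0 then 1 else 0
  A1_supp := by
    intro i j h
    by_cases hc : i = 1 ∧ j = 0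
    · obtain ⟨hi, hj⟩ := hc
      subst hi; subst hj
      simp
    · simp [hc] at h
  Δ := fullOn (ZMod 2) {0}
  Δ_supp := by simpa using fullOn_supp (F := ZMod 2) {0}
  Δ_smul := bot_smul_mem _
  Λ := fullOn (ZMod 2) {1}
  Λ_supp := fullOn_supp _
  Λ_smul := bot_smul_mem _

/-- The template `Φ_{Y₁}`: all groups trivial, `C = Y₀ = ∅`, `|Y₁| = 3`, `|X| = 2`, and
`A₁ = [[1,0,1],[0,1,1]]` (rows `0, 1`; columns `2, 3, 4`). -/
def PhiY1 : FrameTemplate (ZMod 2) where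
  Γ := ⊥
  C := ∅
  X := {0, 1}
  Y0 := ∅
  Y1 := {2, 3, 4}
  disj := by simp [Finset.disjoint_left]
  A1 := fun i j =>
    if (i = 0 ∧ (j = 2 ∨ j = 4)) ∨ (i = 1 ∧ (j = 3 ∨ j = 4)) then 1 else 0
  A1_supp := by
    intro i j h
    by_cases hc : (i = 0 ∧ (j = 2 ∨ j = 4)) ∨ (i = 1 ∧ (j = 3 ∨ j = 4))
    · constructor
      · rcases hc with ⟨hi, _⟩ | ⟨hi, _⟩ <;> subst hi <;> simp
      · rcases hc with ⟨_, hj | hj⟩ | ⟨_, hj | hj⟩ <;> subst hj <;> simp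
    · simp [hc] at h
  Δ := ⊥
  Δ_supp := bot_supp _
  Δ_smul := bot_smul_mem _
  Λ := ⊥
  Λ_supp := bot_supp _
  Λ_smul := bot_smul_mem _

/-- A trivial template: one that is `⪯ Φ₀`. -/
def IsTrivialT (Φ : FrameTemplate (ZMod 2)) : Prop := Preceq Φ Phi0

variable {F : Type} [Field F]

/-- `Φ` is in standard form, with the witnessing partitions `C = C₀ ∪ C₁` and
`X = X₀ ∪ X₁`: `A₁[X₀, C₀]` is an identity matrix and `A₁[X₁, C]` is a zero matrix. -/
def StandardFormOn (Φ : FrameTemplate F) (C0 C1 X0 X1 : Finset ℕ) : Prop :=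
  Φ.C = C0 ∪ C1 ∧ Disjoint C0 C1 ∧ Φ.X = X0 ∪ X1 ∧ Disjoint X0 X1 ∧
  (∃ g : ℕ → ℕ, Set.BijOn g ↑X0 ↑C0 ∧
    ∀ x ∈ X0, ∀ c ∈ C0, Φ.A1 x c = if g x = c then 1 else 0) ∧
  (∀ x ∈ X1, ∀ c ∈ Φ.C, Φ.A1 x c = 0)

/-- `Φ` is in standard form. -/
def StandardForm (Φ : FrameTemplate F) : Prop :=
  ∃ C0 C1 X0 X1, StandardFormOn Φ C0 C1 X0 X1

end FrameTemplate


namespace FrameTemplate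

variable {F : Type} [Field F]

/-! ### Auxiliary development: equivalence of templates under row operations -/

lemma tequiv_refl (Φ : FrameTemplate F) : TEquiv Φ Φ := fun _ _ => Iff.rfl

lemma tequiv_trans {Φ₁ Φ₂ Φ₃ : FrameTemplate F} (h1 : TEquiv Φ₁ Φ₂) (h2 : TEquiv Φ₂ Φ₃) :
    TEquiv Φ₁ Φ₃ := fun α M => (h1 α M).trans (h2 α M)

lemma tequiv_of_steps {Φ Φ' : FrameTemplate F} (h1 : Step Φ Φ') (h2 : Step Φ' Φ) :
    TEquiv Φ Φ' := by
  intro α M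
  constructor
  · rintro ⟨Ψ, hmin, hc⟩
    exact ⟨Ψ, Relation.ReflTransGen.head h2 hmin, hc⟩
  · rintro ⟨Ψ, hmin, hc⟩
    exact ⟨Ψ, Relation.ReflTransGen.head h1 hmin, hc⟩

/-- Elementary row operation: scale row `x` by `k`. -/
def scaleE (x : ℕ) (k : F) : (ℕ → F) → (ℕ → F) := fun v i => if i = x then k * v i else v i

/-- Elementary row operation: add `k` times row `x₁` to row `x₂`. -/
def addE (x₁ x₂ : ℕ) (k : F) : (ℕ → F) → (ℕ → F) :=
  fun v i => if i = x₂ then v i + k * v x₁ else v i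

lemma scaleE_add (x : ℕ) (k : F) (a b : ℕ → F) :
    scaleE x k (a + b) = scaleE x k a + scaleE x k b := by
  funext i; by_cases h : i = x <;> simp [scaleE, h, mul_add]

lemma scaleE_smul (x : ℕ) (k c : F) (v : ℕ → F) :
    scaleE x k (c • v) = c • scaleE x k v := by
  funext i; by_cases h : i = x <;> simp [scaleE, h] <;> ring

lemma addE_add (x₁ x₂ : ℕ) (k : F) (a b : ℕ → F) :
    addE x₁ x₂ k (a + b) = addE x₁ x₂ k a + addE x₁ x₂ k b := by
  funext i; by_cases h : i = x₂ <;> simp [addE, h, mul_add] <;> ring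

lemma addE_smul (x₁ x₂ : ℕ) (k c : F) (v : ℕ → F) :
    addE x₁ x₂ k (c • v) = c • addE x₁ x₂ k v := by
  funext i; by_cases h : i = x₂ <;> simp [addE, h] <;> ring

lemma scaleE_inv (x : ℕ) {k : F} (hk : k ≠ 0) (v : ℕ → F) :
    scaleE x k⁻¹ (scaleE x k v) = v := by
  funext i; by_cases h : i = x <;> simp [scaleE, h]
  rw [← mul_assoc, inv_mul_cancel₀ hk, one_mul]

lemma addE_inv (x₁ x₂ : ℕ) (h : x₁ ≠ x₂) (k : F) (v : ℕ → F) :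
    addE x₁ x₂ (-k) (addE x₁ x₂ k v) = v := by
  funext i; by_cases hi : i = x₂ <;> simp [addE, hi, h]

/-- The template obtained from `Φ` by scaling row `x ∈ X` by `k`. -/
def scaleT (Φ : FrameTemplate F) (x : ℕ) (hx : x ∈ Φ.X) (k : F) : FrameTemplate F where
  Γ := Φ.Γ
  C := Φ.C
  X := Φ.X
  Y0 := Φ.Y0
  Y1 := Φ.Y1
  disj := Φ.disj
  A1 := fun i j => scaleE x k (fun i' => Φ.A1 i' j) i
  A1_supp := by
    intro i j h
    by_cases hix : i = x
    · subst hix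
      simp only [scaleE, if_pos rfl] at h
      have : Φ.A1 i j ≠ 0 := fun h0 => h (by simp [h0])
      exact ⟨hx, (Φ.A1_supp _ _ this).2⟩
    · simp only [scaleE, if_neg hix] at h
      exact Φ.A1_supp _ _ h
  Δ := Φ.Δ
  Δ_supp := Φ.Δ_supp
  Δ_smul := Φ.Δ_smul
  Λ := AddSubgroup.map (AddMonoidHom.mk' (scaleE x k) (scaleE_add x k)) Φ.Λ
  Λ_supp := by
    rintro v hv i hi
    obtain ⟨w, hw, rfl⟩ := AddSubgroup.mem_map.mp hv
    have hix : i ≠ x := fun h => hi (h ▸ hx)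
    show scaleE x k w i = 0
    rw [scaleE]
    simp only [if_neg hix]
    exact Φ.Λ_supp w hw i hi
  Λ_smul := by
    rintro γ hγ v hv
    obtain ⟨w, hw, rfl⟩ := AddSubgroup.mem_map.mp hv
    refine AddSubgroup.mem_map.mpr ⟨(γ : F) • w, Φ.Λ_smul γ hγ w hw, ?_⟩
    show scaleE x k ((γ : F) • w) = (γ : F) • scaleE x k w
    exact scaleE_smul x k (γ : F) w

/-- The template obtained from `Φ` by adding `k` times row `x₁` to row `x₂`. -/
def addT (Φ : FrameTemplate F) (x₁ x₂ : ℕ) (h1 : x₁ ∈ Φ.X) (h2 : x₂ ∈ Φ.X)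
    (hne : x₁ ≠ x₂) (k : F) : FrameTemplate F where
  Γ := Φ.Γ
  C := Φ.C
  X := Φ.X
  Y0 := Φ.Y0
  Y1 := Φ.Y1
  disj := Φ.disj
  A1 := fun i j => addE x₁ x₂ k (fun i' => Φ.A1 i' j) i
  A1_supp := by
    intro i j h
    by_cases hix : i = x₂
    · subst hix
      simp only [addE, if_pos rfl] at h
      rcases eq_or_ne (Φ.A1 i j) 0 with h0 | h0
      · have h1' : Φ.A1 x₁ j ≠ 0 := by
          intro hz; exact h (by simp [h0, hz])
        exact ⟨h2, (Φ.A1_supp _ _ h1').2⟩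
      · exact ⟨h2, (Φ.A1_supp _ _ h0).2⟩
    · simp only [addE, if_neg hix] at h
      exact Φ.A1_supp _ _ h
  Δ := Φ.Δ
  Δ_supp := Φ.Δ_supp
  Δ_smul := Φ.Δ_smul
  Λ := AddSubgroup.map (AddMonoidHom.mk' (addE x₁ x₂ k) (addE_add x₁ x₂ k)) Φ.Λ
  Λ_supp := by
    rintro v hv i hi
    obtain ⟨w, hw, rfl⟩ := AddSubgroup.mem_map.mp hv
    have hix : i ≠ x₂ := fun h => hi (h ▸ h2)
    show addE x₁ x₂ k w i = 0
    rw [addE]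
    simp only [if_neg hix]
    exact Φ.Λ_supp w hw i hi
  Λ_smul := by
    rintro γ hγ v hv
    obtain ⟨w, hw, rfl⟩ := AddSubgroup.mem_map.mp hv
    refine AddSubgroup.mem_map.mpr ⟨(γ : F) • w, Φ.Λ_smul γ hγ w hw, ?_⟩
    show addE x₁ x₂ k ((γ : F) • w) = (γ : F) • addE x₁ x₂ k w
    exact addE_smul x₁ x₂ k (γ : F) w

lemma scaleT_A1 (Φ : FrameTemplate F) (x : ℕ) (hx : x ∈ Φ.X) (k : F) (i j : ℕ) :
    (Φ.scaleT x hx k).A1 i j = if i = x then k * Φ.A1 i j else Φ.A1 i j := rfl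

lemma addT_A1 (Φ : FrameTemplate F) (x₁ x₂ : ℕ) (h1 : x₁ ∈ Φ.X) (h2 : x₂ ∈ Φ.X)
    (hne : x₁ ≠ x₂) (k : F) (i j : ℕ) :
    (Φ.addT x₁ x₂ h1 h2 hne k).A1 i j =
      if i = x₂ then Φ.A1 i j + k * Φ.A1 x₁ j else Φ.A1 i j := rfl

lemma step_scaleT (Φ : FrameTemplate F) (x : ℕ) (hx : x ∈ Φ.X) {k : F} (hk : k ≠ 0) :
    Step Φ (Φ.scaleT x hx k) := by
  refine Or.inr (Or.inr (Or.inr (Or.inr (Or.inl ?_))))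
  refine ⟨scaleE x k, Or.inr (Or.inl ⟨x, hx, k, hk, rfl⟩),
    rfl, rfl, rfl, rfl, rfl, rfl, rfl, ?_⟩
  show (↑(AddSubgroup.map (AddMonoidHom.mk' (scaleE x k) (scaleE_add x k)) Φ.Λ) :
      Set (ℕ → F)) = scaleE x k '' ↑Φ.Λ
  rw [AddSubgroup.coe_map]
  rfl

lemma step_scaleT_rev (Φ : FrameTemplate F) (x : ℕ) (hx : x ∈ Φ.X) {k : F} (hk : k ≠ 0) :
    Step (Φ.scaleT x hx k) Φ := by
  refine Or.inr (Or.inr (Or.inr (Or.inr (Or.inl ?_))))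
  refine ⟨scaleE x k⁻¹, Or.inr (Or.inl ⟨x, hx, k⁻¹, inv_ne_zero hk, rfl⟩),
    rfl, rfl, rfl, rfl, rfl, ?_, rfl, ?_⟩
  · funext i j
    exact (congrFun (scaleE_inv x hk (fun i' => Φ.A1 i' j)) i).symm
  · show (↑Φ.Λ : Set (ℕ → F)) = scaleE x k⁻¹ '' ↑(Φ.scaleT x hx k).Λ
    have h' : (↑(Φ.scaleT x hx k).Λ : Set (ℕ → F)) = scaleE x k '' ↑Φ.Λ := by
      rw [show (Φ.scaleT x hx k).Λ =
        AddSubgroup.map (AddMonoidHom.mk' (scaleE x k) (scaleE_add x k)) Φ.Λ from rfl,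
        AddSubgroup.coe_map]
      rfl
    rw [h', ← Set.image_comp]
    have h'' : (scaleE x k⁻¹ ∘ scaleE x k) = id := by
      funext v; exact scaleE_inv x hk v
    rw [h'', Set.image_id]

lemma step_addT (Φ : FrameTemplate F) (x₁ x₂ : ℕ) (h1 : x₁ ∈ Φ.X) (h2 : x₂ ∈ Φ.X)
    (hne : x₁ ≠ x₂) (k : F) : Step Φ (Φ.addT x₁ x₂ h1 h2 hne k) := by
  refine Or.inr (Or.inr (Or.inr (Or.inr (Or.inl ?_))))
  refine ⟨addE x₁ x₂ k, Or.inr (Or.inr ⟨x₁, h1, x₂, h2, hne, k, rfl⟩),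
    rfl, rfl, rfl, rfl, rfl, rfl, rfl, ?_⟩
  show (↑(AddSubgroup.map (AddMonoidHom.mk' (addE x₁ x₂ k) (addE_add x₁ x₂ k)) Φ.Λ) :
      Set (ℕ → F)) = addE x₁ x₂ k '' ↑Φ.Λ
  rw [AddSubgroup.coe_map]
  rfl

lemma step_addT_rev (Φ : FrameTemplate F) (x₁ x₂ : ℕ) (h1 : x₁ ∈ Φ.X) (h2 : x₂ ∈ Φ.X)
    (hne : x₁ ≠ x₂) (k : F) : Step (Φ.addT x₁ x₂ h1 h2 hne k) Φ := by
  refine Or.inr (Or.inr (Or.inr (Or.inr (Or.inl ?_))))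
  refine ⟨addE x₁ x₂ (-k), Or.inr (Or.inr ⟨x₁, h1, x₂, h2, hne, -k, rfl⟩),
    rfl, rfl, rfl, rfl, rfl, ?_, rfl, ?_⟩
  · funext i j
    exact (congrFun (addE_inv x₁ x₂ hne k (fun i' => Φ.A1 i' j)) i).symm
  · show (↑Φ.Λ : Set (ℕ → F)) = addE x₁ x₂ (-k) '' ↑(Φ.addT x₁ x₂ h1 h2 hne k).Λ
    have h' : (↑(Φ.addT x₁ x₂ h1 h2 hne k).Λ : Set (ℕ → F)) = addE x₁ x₂ k '' ↑Φ.Λ := by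
      rw [show (Φ.addT x₁ x₂ h1 h2 hne k).Λ =
        AddSubgroup.map (AddMonoidHom.mk' (addE x₁ x₂ k) (addE_add x₁ x₂ k)) Φ.Λ from rfl,
        AddSubgroup.coe_map]
      rfl
    rw [h', ← Set.image_comp]
    have h'' : (addE x₁ x₂ (-k) ∘ addE x₁ x₂ k) = id := by
      funext v; exact addE_inv x₁ x₂ hne k v
    rw [h'', Set.image_id]

lemma tequiv_scaleT (Φ : FrameTemplate F) (x : ℕ) (hx : x ∈ Φ.X) {k : F} (hk : k ≠ 0) :
    TEquiv Φ (Φ.scaleT x hx k) :=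
  tequiv_of_steps (step_scaleT Φ x hx hk) (step_scaleT_rev Φ x hx hk)

lemma tequiv_addT (Φ : FrameTemplate F) (x₁ x₂ : ℕ) (h1 : x₁ ∈ Φ.X) (h2 : x₂ ∈ Φ.X)
    (hne : x₁ ≠ x₂) (k : F) : TEquiv Φ (Φ.addT x₁ x₂ h1 h2 hne k) :=
  tequiv_of_steps (step_addT Φ x₁ x₂ h1 h2 hne k) (step_addT_rev Φ x₁ x₂ h1 h2 hne k)

/-- Clearing a set `T` of rows in column `c`, using pivot row `x`. -/
lemma clear_col (Φ : FrameTemplate F) (x c : ℕ) (hx : x ∈ Φ.X) :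
    ∀ T : Finset ℕ, T ⊆ Φ.X → x ∉ T →
    ∃ Φ' : FrameTemplate F, TEquiv Φ Φ' ∧ Φ'.C = Φ.C ∧ Φ'.X = Φ.X ∧
      ∀ i j, Φ'.A1 i j =
        if i ∈ T then Φ.A1 i j - Φ.A1 i c * Φ.A1 x j else Φ.A1 i j := by
  intro T
  induction T using Finset.induction_on with
  | empty => exact fun _ _ => ⟨Φ, tequiv_refl Φ, rfl, rfl, fun i j => by simp⟩
  | @insert a T ha IH =>
    intro hsub hxT
    have hxT' : x ∉ T := fun h => hxT (Finset.mem_insert_of_mem h)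
    have hax : x ≠ a := fun h => hxT (h ▸ Finset.mem_insert_self a T)
    obtain ⟨Φ₁, heq, hC, hX, hA⟩ := IH (fun y hy => hsub (Finset.mem_insert_of_mem hy)) hxT'
    have hx1 : x ∈ Φ₁.X := hX ▸ hx
    have ha1 : a ∈ Φ₁.X := hX ▸ hsub (Finset.mem_insert_self a T)
    refine ⟨Φ₁.addT x a hx1 ha1 hax (-(Φ.A1 a c)),
      tequiv_trans heq (tequiv_addT Φ₁ x a hx1 ha1 hax _), hC, hX, ?_⟩
    intro i j
    rw [addT_A1]
    by_cases hia : i = a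
    · subst hia
      rw [if_pos rfl, if_pos (Finset.mem_insert_self i T), hA i j, if_neg ha,
        hA x j, if_neg hxT']
      ring
    · rw [if_neg hia, hA i j]
      by_cases hiT : i ∈ T
      · rw [if_pos hiT, if_pos (Finset.mem_insert_of_mem hiT)]
      · rw [if_neg hiT, if_neg (by simp [hia, hiT])]

/-- The main Gauss-Jordan elimination lemma. -/
lemma gauss_main : ∀ (n : ℕ) (Φ : FrameTemplate F) (R C0 X0 : Finset ℕ) (g : ℕ → ℕ),
    R.card = n → R ⊆ Φ.X → C0 ⊆ Φ.C → X0 ⊆ Φ.X → Disjoint X0 R →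
    Set.BijOn g ↑X0 ↑C0 →
    (∀ x ∈ X0, ∀ c ∈ C0, Φ.A1 x c = if g x = c then 1 else 0) →
    (∀ x ∈ Φ.X, x ∉ X0 → x ∉ R → ∀ c ∈ Φ.C, Φ.A1 x c = 0) →
    (∀ x ∈ Φ.X, x ∉ X0 → ∀ c ∈ C0, Φ.A1 x c = 0) →
    ∃ Φ' : FrameTemplate F, TEquiv Φ Φ' ∧ StandardForm Φ' := by
  intro n
  induction n with
  | zero =>
    intro Φ R C0 X0 g hcard hR hC0 hX0 hdisj hg hid hzero _
    have hRe : R = ∅ := Finset.card_eq_zero.mp hcard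
    subst hRe
    refine ⟨Φ, tequiv_refl Φ, C0, Φ.C \ C0, X0, Φ.X \ X0,
      (Finset.union_sdiff_of_subset hC0).symm, Finset.disjoint_sdiff,
      (Finset.union_sdiff_of_subset hX0).symm, Finset.disjoint_sdiff,
      ⟨g, hg, hid⟩, ?_⟩
    intro y hy c hc
    rw [Finset.mem_sdiff] at hy
    exact hzero y hy.1 hy.2 (Finset.notMem_empty y) c hc
  | succ n IH =>
    intro Φ R C0 X0 g hcard hR hC0 hX0 hdisj hg hid hzero hcol
    obtain ⟨x, hxR⟩ := Finset.card_pos.mp (by rw [hcard]; exact n.succ_pos)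
    have hxX : x ∈ Φ.X := hR hxR
    have hxX0 : x ∉ X0 := Finset.disjoint_right.mp hdisj hxR
    have hcard' : (R.erase x).card = n := by
      rw [Finset.card_erase_of_mem hxR, hcard]
      rfl
    by_cases hcaseA : ∀ c ∈ Φ.C, Φ.A1 x c = 0
    · refine IH Φ (R.erase x) C0 X0 g hcard' ((R.erase_subset x).trans hR) hC0 hX0
        (hdisj.mono_right (R.erase_subset x)) hg hid ?_ hcol
      intro y hy hy0 hyR c hc
      by_cases hyx : y = x
      · exact hyx ▸ hcaseA c hc
      · exact hzero y hy hy0 (fun h => hyR (Finset.mem_erase.mpr ⟨hyx, h⟩)) c hc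
    · push_neg at hcaseA
      obtain ⟨c, hcC, hne⟩ := hcaseA
      have hcC0 : c ∉ C0 := fun h => hne (hcol x hxX hxX0 c h)
      set k : F := (Φ.A1 x c)⁻¹ with hkdef
      have hk : k ≠ 0 := inv_ne_zero hne
      have hu : k * Φ.A1 x c = 1 := inv_mul_cancel₀ hne
      obtain ⟨Φ₂, heq12, hC2, hX2, hA2⟩ := clear_col (Φ.scaleT x hxX k) x c hxX
        (Φ.X.erase x) (Φ.X.erase_subset x) (Finset.notMem_erase x Φ.X)
      have hC2' : Φ₂.C = Φ.C := hC2
      have hX2' : Φ₂.X = Φ.X := hX2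
      have hA2x : ∀ j, Φ₂.A1 x j = k * Φ.A1 x j := by
        intro j
        rw [hA2, if_neg (Finset.notMem_erase x Φ.X), scaleT_A1, if_pos rfl]
      have hA2row : ∀ i, i ≠ x → ∀ j, Φ₂.A1 i j =
          if i ∈ Φ.X then Φ.A1 i j - Φ.A1 i c * (k * Φ.A1 x j) else Φ.A1 i j := by
        intro i hix j
        rw [hA2]
        by_cases hiX : i ∈ Φ.X
        · rw [if_pos (Finset.mem_erase.mpr ⟨hix, hiX⟩), if_pos hiX,
            scaleT_A1, if_neg hix, scaleT_A1, if_neg hix, scaleT_A1, if_pos rfl]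
        · rw [if_neg (fun h => hiX (Finset.mem_of_mem_erase h)), if_neg hiX,
            scaleT_A1, if_neg hix]
      have hyp1 : R.erase x ⊆ Φ₂.X := by
        rw [hX2']; exact (R.erase_subset x).trans hR
      have hyp2 : insert c C0 ⊆ Φ₂.C := by
        rw [hC2']; exact Finset.insert_subset hcC hC0
      have hyp3 : insert x X0 ⊆ Φ₂.X := by
        rw [hX2']; exact Finset.insert_subset hxX hX0
      have hyp4 : Disjoint (insert x X0) (R.erase x) := by
        rw [Finset.disjoint_insert_left]
        exact ⟨Finset.notMem_erase x R, hdisj.mono_right (R.erase_subset x)⟩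
      have hyp5 : Set.BijOn (Function.update g x c) ↑(insert x X0) ↑(insert c C0) := by
        have hg' : Set.BijOn (Function.update g x c) ↑X0 ↑C0 := by
          refine hg.congr ?_
          intro y hy
          exact (Function.update_of_ne (fun h : y = x => hxX0 (h ▸ hy)) c g).symm
        have hins := hg'.insert (a := x)
          (by rw [Function.update_self]; exact fun h => hcC0 h)
        rw [Function.update_self] at hins
        simpa using hins
      have hyp6 : ∀ x' ∈ insert x X0, ∀ c' ∈ insert c C0,
          Φ₂.A1 x' c' = if Function.update g x c x' = c' then 1 else 0 := by
        intro x' hx' c' hc'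
        rw [Finset.mem_insert] at hx' hc'
        rcases hx' with hx' | hx'
        · subst hx'
          rw [hA2x, Function.update_self]
          rcases hc' with hc' | hc'
          · subst hc'; rw [if_pos rfl]; exact hu
          · rw [if_neg (fun h : c = c' => hcC0 (h ▸ hc')), hcol x' hxX hxX0 c' hc',
              mul_zero]
        · have hx'X : x' ∈ Φ.X := hX0 hx'
          have hx'x : x' ≠ x := fun h => hxX0 (h ▸ hx')
          rw [hA2row x' hx'x, if_pos hx'X, Function.update_of_ne hx'x]
          rcases hc' with hc' | hc'
          · have hgx' : g x' ∈ C0 := Finset.mem_coe.mp (hg.mapsTo (Finset.mem_coe.mpr hx'))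
            rw [hc', hu, mul_one, sub_self, if_neg (fun h : g x' = c => hcC0 (h ▸ hgx'))]
          · rw [hcol x hxX hxX0 c' hc', mul_zero, mul_zero, sub_zero]
            exact hid x' hx' c' hc'
      have hyp7 : ∀ y ∈ Φ₂.X, y ∉ insert x X0 → y ∉ R.erase x →
          ∀ c' ∈ Φ₂.C, Φ₂.A1 y c' = 0 := by
        intro y hy hy0 hyR c' hc'
        rw [hX2'] at hy
        rw [hC2'] at hc'
        have hyx : y ≠ x := fun h => hy0 (h ▸ Finset.mem_insert_self x X0)
        have hyX0 : y ∉ X0 := fun h => hy0 (Finset.mem_insert_of_mem h)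
        have hyR' : y ∉ R := fun h => hyR (Finset.mem_erase.mpr ⟨hyx, h⟩)
        rw [hA2row y hyx, if_pos hy, hzero y hy hyX0 hyR' c' hc',
          hzero y hy hyX0 hyR' c hcC, zero_mul, sub_zero]
      have hyp8 : ∀ y ∈ Φ₂.X, y ∉ insert x X0 →
          ∀ c' ∈ insert c C0, Φ₂.A1 y c' = 0 := by
        intro y hy hy0 c' hc'
        rw [hX2'] at hy
        rw [Finset.mem_insert] at hc'
        have hyx : y ≠ x := fun h => hy0 (h ▸ Finset.mem_insert_self x X0)
        have hyX0 : y ∉ X0 := fun h => hy0 (Finset.mem_insert_of_mem h)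
        rw [hA2row y hyx, if_pos hy]
        rcases hc' with hc' | hc'
        · subst hc'
          rw [hu, mul_one, sub_self]
        · rw [hcol y hy hyX0 c' hc', hcol x hxX hxX0 c' hc', mul_zero, mul_zero,
            sub_zero]
      obtain ⟨Φ', heq', hsf⟩ := IH Φ₂ (R.erase x) (insert c C0) (insert x X0)
        (Function.update g x c) hcard' hyp1 hyp2 hyp3 hyp4 hyp5 hyp6 hyp7 hyp8
      exact ⟨Φ', tequiv_trans (tequiv_trans (tequiv_scaleT Φ x hxX hk) heq12) heq', hsf⟩

end FrameTemplate


open FrameTemplate in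
/-- Every frame template over a finite field is equivalent to a frame
template in standard form. -/
theorem equivalent_to_standard_form {F : Type} [Field F] [Fintype F]
    (Φ : FrameTemplate F) :
    ∃ Φ' : FrameTemplate F, TEquiv Φ Φ' ∧ StandardForm Φ' := by
  refine FrameTemplate.gauss_main Φ.X.card Φ Φ.X ∅ ∅ id rfl (subset_refl _)
    (Finset.empty_subset _) (Finset.empty_subset _) (Finset.disjoint_empty_left _)
    (by simpa using Set.bijOn_empty (id : ℕ → ℕ)) (by simp) ?_ (by simp)
  intro x hx _ hxR _ _
  exact absurd hx hxR

end TemplatePaper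
end

section
/- For every positive integer k, there are at most finitely many integers r such that the complete graphic matroid M(K_{r+1}) is a rank-(≤k) perturbation (over GF(2)) of a cographic matroid. -/
open Matroid Set

namespace TemplatePaper

variable {α β γ : Type*}

/-- `M₂` is a rank-`(≤ t)` perturbation of `M₁` over `GF(2)`: there are `GF(2)`-matrices
`A₁, A₂` with the same row and column index sets such that `M₁ ≅ M(A₁)`, `M₂ ≅ M(A₂)`,
and `A₁ - A₂` has rank at most `t`. -/
def IsRankLePerturbation {α β : Type*} (t : ℕ) (M₁ : Matroid α) (M₂ : Matroid β) :
    Prop :=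
  ∃ (m : ℕ) (Ecols : Finset ℕ) (A₁ A₂ : Fin m → ℕ → ZMod 2) (N₁ N₂ : Matroid ℕ),
    IsColMatroidOf N₁ Ecols A₁ ∧ IsColMatroidOf N₂ Ecols A₂ ∧
    MIso M₁ N₁ ∧ MIso M₂ N₂ ∧
    Module.finrank (ZMod 2) (Submodule.span (ZMod 2)
      ((fun j : ℕ => fun i : Fin m => A₁ i j - A₂ i j) '' ↑Ecols)) ≤ t

/-- `Q` is (isomorphic to) the cycle matroid `M(K_{r+1})` of the complete graph on
`r + 1` vertices: its ground set is in bijection with the edges of `K_{r+1}`, with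
independence given by linear independence of the corresponding columns of the
`GF(2)` vertex-edge incidence matrix. -/
def IsCycleMatroidOfCompleteGraph {γ : Type*} (r : ℕ) (Q : Matroid γ) : Prop :=
  ∃ f : γ → Sym2 (Fin (r + 1)),
    Set.BijOn f Q.E {p : Sym2 (Fin (r + 1)) | ¬ p.IsDiag} ∧
    ∀ I ⊆ Q.E, (Q.Indep I ↔ LinearIndependent (ZMod 2)
      (fun e : I => fun v : Fin (r + 1) => if v ∈ f (e : γ) then (1 : ZMod 2) else 0))

section LinAlg

variable {F : Type} [Field F] {V : Type*} [AddCommGroup V] [Module F V]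

/-- Independence of the family of vectors `c e`, `e ∈ I`. -/
def FamIndep (F : Type) [Field F] {V : Type*} [AddCommGroup V] [Module F V]
    (c : ℕ → V) (I : Set ℕ) : Prop :=
  LinearIndependent F (fun e : I => c e)

lemma FamIndep.mono {c : ℕ → V} {I J : Set ℕ} (hIJ : I ⊆ J) (h : FamIndep F c J) :
    FamIndep F c I :=
  h.comp (Set.inclusion hIJ) (Set.inclusion_injective hIJ)

lemma FamIndep.injOn {c : ℕ → V} {I : Set ℕ} (h : FamIndep F c I) :
    Set.InjOn c I := by
  intro a ha b hb hab
  have h2 : (⟨a, ha⟩ : I) = ⟨b, hb⟩ :=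
    h.injective (show c ((⟨a, ha⟩ : I) : ℕ) = c ((⟨b, hb⟩ : I) : ℕ) from hab)
  exact congrArg Subtype.val h2

lemma FamIndep.nonzero {c : ℕ → V} {I : Set ℕ} (h : FamIndep F c I) {a : ℕ}
    (ha : a ∈ I) : c a ≠ 0 :=
  LinearIndependent.ne_zero (⟨a, ha⟩ : I) h

lemma famIndep_insert {c : ℕ → V} {I : Set ℕ} {a : ℕ} (ha : a ∉ I) :
    FamIndep F c (insert a I) ↔
      FamIndep F c I ∧ c a ∉ Submodule.span F (c '' I) :=
  linearIndepOn_insert ha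

lemma famIndep_singleton {c : ℕ → V} {a : ℕ} (h : c a ≠ 0) :
    FamIndep F c {a} := by
  unfold FamIndep
  exact linearIndependent_unique_iff.mpr h

/-- two distinct nonzero vectors over GF(2) are independent -/
lemma famIndep_pair_zmod2 {V : Type*} [AddCommGroup V] [Module (ZMod 2) V]
    {c : ℕ → V} {a b : ℕ} (hab : a ≠ b) (hb : c b ≠ 0) (hne : c a ≠ c b)
    (ha : c a ≠ 0) : FamIndep (ZMod 2) c {a, b} := by
  have hbI : a ∉ ({b} : Set ℕ) := by simpa using hab
  rw [show ({a, b} : Set ℕ) = insert a {b} from rfl, famIndep_insert hbI]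
  refine ⟨famIndep_singleton hb, ?_⟩
  rw [Set.image_singleton]
  intro hmem
  rw [Submodule.mem_span_singleton] at hmem
  obtain ⟨s, hs⟩ := hmem
  rcases (by decide : ∀ t : ZMod 2, t = 0 ∨ t = 1) s with h | h <;> subst h
  · rw [zero_smul] at hs; exact ha hs.symm
  · rw [one_smul] at hs; exact hne hs.symm

/-- a maximal independent subfamily of a finite family spans everything -/
lemma exists_famIndep_spanning (c : ℕ → V) (X : Set ℕ) :
    ∃ B ⊆ X, FamIndep F c B ∧
      Submodule.span F (c '' B) = Submodule.span F (c '' X) := by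
  obtain ⟨b, hbsub, hbspan, hbind⟩ := exists_linearIndependent F (c '' X)
  have hex : ∀ v : b, ∃ e ∈ X, c e = (v : V) := fun v => hbsub v.2
  choose g hgX hgc using hex
  have himg : c '' Set.range g = b := by
    rw [← Set.range_comp]
    have : (c ∘ g) = fun v : b => (v : V) := funext fun v => hgc v
    rw [this, Subtype.range_coe]
  refine ⟨Set.range g, ?_, ?_, ?_⟩
  · rintro _ ⟨v, rfl⟩; exact hgX v
  · have hinj : Set.InjOn c (Set.range g) := by
      rintro _ ⟨v, rfl⟩ _ ⟨w, rfl⟩ h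
      rw [hgc v, hgc w] at h
      exact congrArg g (Subtype.ext h)
    rw [FamIndep, show (LinearIndependent F fun e : Set.range g => c e) ↔ _ from linearIndepOn_iff_image hinj, himg]
    exact hbind
  · rw [himg, hbspan]

variable {n : Type*} [Fintype n] [DecidableEq n]

/-- dot product as a linear map in the second argument -/
def dotL (F : Type) [Field F] {n : Type*} [Fintype n] (u : n → F) :
    (n → F) →ₗ[F] F where
  toFun x := ∑ i, u i * x i
  map_add' x y := by simp [mul_add, Finset.sum_add_distrib]
  map_smul' a x := by simp [Finset.mul_sum, mul_left_comm]

lemma dotL_apply (u x : n → F) : dotL F u x = ∑ i, u i * x i := rfl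

lemma dotL_eq_zero_of_span {u : n → F} {s : Set (n → F)}
    (h : ∀ v ∈ s, dotL F u v = 0) {x : n → F} (hx : x ∈ Submodule.span F s) :
    dotL F u x = 0 := by
  have hle : Submodule.span F s ≤ LinearMap.ker (dotL F u) :=
    Submodule.span_le.mpr fun v hv => h v hv
  exact hle hx

/-- separating functional for a strict inclusion of subspaces of `F^n` -/
lemma exists_dot_functional {p q : Submodule F (n → F)} (h : p < q) :
    ∃ u : n → F, (∀ x ∈ p, dotL F u x = 0) ∧ ∃ y ∈ q, dotL F u y ≠ 0 := by
  obtain ⟨y, hyq, hyp⟩ := SetLike.exists_of_lt h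
  have hy0 : p.mkQ y ≠ 0 := by
    simpa [Submodule.Quotient.mk_eq_zero] using hyp
  have hφ : ∃ φ : Module.Dual F (_ ⧸ p), φ (p.mkQ y) ≠ 0 := by
    by_contra hcon
    push_neg at hcon
    exact hy0 ((Module.forall_dual_apply_eq_zero_iff F _).mp hcon)
  obtain ⟨φ, hφ⟩ := hφ
  have hrep : ∀ x : n → F,
      (φ.comp p.mkQ) x = ∑ i, (φ.comp p.mkQ) ((fun j => if i = j then (1:F) else 0)) * x i := by
    intro x
    conv_lhs => rw [pi_eq_sum_univ x]
    rw [map_sum]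
    refine Finset.sum_congr rfl fun i _ => ?_
    rw [map_smul, smul_eq_mul, mul_comm]
  refine ⟨fun i => (φ.comp p.mkQ) ((fun j => if i = j then (1:F) else 0)), fun x hx => ?_, y, hyq, ?_⟩
  · have hx0 : p.mkQ x = 0 := (Submodule.Quotient.mk_eq_zero p).mpr hx
    have hzero : (φ.comp p.mkQ) x = 0 := by
      rw [LinearMap.comp_apply, hx0, map_zero]
    rw [dotL_apply, ← hrep x, hzero]
  · rw [dotL_apply, ← hrep y]
    exact hφ

end LinAlg
section Bridge

variable {F : Type} [Field F] {ρ : Type*} [Fintype ρ]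

lemma isRepBy_famIndep {M : Matroid ℕ} {A : ρ → ℕ → F}
    (hrep : IsRepBy F M A) {I : Set ℕ} (hI : I ⊆ M.E) :
    M.Indep I ↔ FamIndep F (fun j => fun i => A i j) I :=
  hrep I hI

/-- Bridge: dual independence corresponds to spanning of the complement's columns. -/
lemma dual_indep_iff_span_eq {M : Matroid ℕ} {A : ρ → ℕ → F}
    (hrep : IsRepBy F M A) {I : Set ℕ} (hI : I ⊆ M.E) :
    M✶.Indep I ↔
      Submodule.span F ((fun j => fun i => A i j) '' (M.E \ I)) =
        Submodule.span F ((fun j => fun i => A i j) '' M.E) := by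
  set c : ℕ → (ρ → F) := fun j => fun i => A i j with hc
  constructor
  · rintro hdual
    obtain ⟨-, B, hB, hIB⟩ := (Matroid.dual_indep_iff_exists' (M := M)).mp hdual
    have hBsub : B ⊆ M.E \ I :=
      Set.subset_diff.mpr ⟨hB.subset_ground, hIB.symm⟩
    refine le_antisymm (Submodule.span_mono (Set.image_mono (Set.diff_subset))) ?_
    have hcol : ∀ e ∈ M.E, c e ∈ Submodule.span F (c '' B) := by
      intro e he
      by_cases heB : e ∈ B
      · exact Submodule.subset_span ⟨e, heB, rfl⟩
      · have hdep : ¬ M.Indep (insert e B) := (hB.insert_dep ⟨he, heB⟩).not_indep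
        have hBind : FamIndep F c B :=
          (isRepBy_famIndep hrep hB.subset_ground).mp hB.indep
        by_contra hnot
        exact hdep ((isRepBy_famIndep hrep
          (Set.insert_subset he hB.subset_ground)).mpr
          ((famIndep_insert heB).mpr ⟨hBind, hnot⟩))
    refine Submodule.span_le.mpr ?_
    rintro _ ⟨e, he, rfl⟩
    exact Submodule.span_mono (Set.image_mono hBsub) (hcol e he)
  · intro hspan
    obtain ⟨B, hBsub, hBind, hBspan⟩ := exists_famIndep_spanning (F := F) c (M.E \ I)
    have hBE : B ⊆ M.E := hBsub.trans Set.diff_subset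
    have hBindep : M.Indep B := (isRepBy_famIndep hrep hBE).mpr hBind
    have hBbase : M.IsBase B := by
      refine hBindep.isBase_of_forall_insert ?_
      rintro e ⟨he, heB⟩ hins
      have hfam : FamIndep F c (insert e B) :=
        (isRepBy_famIndep hrep (Set.insert_subset he hBE)).mp hins
      have : c e ∉ Submodule.span F (c '' B) := ((famIndep_insert heB).mp hfam).2
      apply this
      rw [hBspan, hspan]
      exact Submodule.subset_span ⟨e, he, rfl⟩
    exact (Matroid.dual_indep_iff_exists' (M := M)).mpr
      ⟨hI, B, hBbase, (Set.subset_diff.mp hBsub).2.symm⟩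

end Bridge
section Cographic

lemma zmod2_cases : ∀ a : ZMod 2, a = 0 ∨ a = 1 := by decide
lemma zmod2_add_eq_zero : ∀ a b : ZMod 2, a + b = 0 ↔ a = b := by decide

/-- weight expansion of the dot product over GF(2) -/
lemma dot_eq_sum_supp {p : ℕ} (u v : Fin p → ZMod 2) :
    dotL (ZMod 2) u v = ∑ i ∈ Finset.univ.filter (fun i => v i ≠ 0), u i := by
  classical
  rw [dotL_apply, ← Finset.sum_filter_add_sum_filter_not Finset.univ (fun i => v i ≠ 0)]
  have h2 : ∑ i ∈ Finset.univ.filter (fun i => ¬ v i ≠ 0), u i * v i = 0 := by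
    refine Finset.sum_eq_zero fun i hi => ?_
    rw [Finset.mem_filter] at hi
    push_neg at hi
    rw [hi.2, mul_zero]
  rw [h2, add_zero]
  refine Finset.sum_congr rfl fun i hi => ?_
  rw [Finset.mem_filter] at hi
  rcases zmod2_cases (v i) with h | h
  · exact absurd h hi.2
  · rw [h, mul_one]

set_option maxHeartbeats 1600000 in
/-- KEY LEMMA: a subset of a cographic matroid all of whose pairs are independent,
and in which every independent subset has at most `s` elements, has at most `3s`
elements. -/
lemma card_le_of_cographic_simple {N : Matroid ℕ} (hcog : IsCographic N)
    (S : Finset ℕ) (hSE : ↑S ⊆ N.E)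
    {s : ℕ} (hpairs : ∀ a ∈ S, ∀ b ∈ S, N.Indep {a, b})
    (hrk : ∀ I : Finset ℕ, ↑I ⊆ (S : Set ℕ) → N.Indep ↑I → I.card ≤ s) :
    S.card ≤ 3 * s := by
  classical
  obtain ⟨p, G, hrep, hwt⟩ := hcog
  set c : ℕ → (Fin p → ZMod 2) := fun j => fun i => G i j with hc
  set E : Set ℕ := N.E with hE
  have hEdual : N✶.E = E := Matroid.dual_ground
  -- the bridge
  have bridge : ∀ I : Set ℕ, I ⊆ E →
      (N.Indep I ↔ Submodule.span (ZMod 2) (c '' (E \ I)) = Submodule.span (ZMod 2) (c '' E)) := by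
    intro I hI
    have h1 : N✶✶ = N := Matroid.dual_dual N
    rw [← h1]
    have := dual_indep_iff_span_eq (hrep) (I := I) (by rwa [hEdual])
    rw [hEdual, ← hc] at this
    exact this
  -- the "cocycle" space supported away from S, and its projection to S
  set U : Submodule (ZMod 2) (Fin p → (ZMod 2)) :=
    { carrier := {u | ∀ e ∈ E \ ↑S, dotL (ZMod 2) u (c e) = 0},
      add_mem' := by
        intro a b ha hb e he
        have : dotL (ZMod 2) (a + b) (c e) = dotL (ZMod 2) a (c e) + dotL (ZMod 2) b (c e) := by
          simp [dotL_apply, add_mul, Finset.sum_add_distrib]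
        rw [this, ha e he, hb e he, add_zero]
      zero_mem' := by
        intro e he
        simp [dotL_apply]
      smul_mem' := by
        intro t a ha e he
        have : dotL (ZMod 2) (t • a) (c e) = t * dotL (ZMod 2) a (c e) := by
          simp [dotL_apply, Finset.mul_sum, mul_assoc]
        rw [this, ha e he, mul_zero] } with hU
  have hUmem : ∀ u : Fin p → (ZMod 2), u ∈ U ↔ ∀ e ∈ E \ ↑S, dotL (ZMod 2) u (c e) = 0 :=
    fun u => Iff.rfl
  set φS : (Fin p → (ZMod 2)) →ₗ[(ZMod 2)] (↥S → (ZMod 2)) :=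
    { toFun := fun u => fun e => dotL (ZMod 2) u (c (e : ℕ)),
      map_add' := by
        intro a b; funext e; simp [dotL_apply, add_mul, Finset.sum_add_distrib]
      map_smul' := by
        intro t a; funext e; simp [dotL_apply, Finset.mul_sum, mul_assoc] } with hφS
  set C0 : Submodule (ZMod 2) (↥S → (ZMod 2)) := U.map φS with hC0
  have hφSapp : ∀ (u : Fin p → ZMod 2) (e : ↥S), φS u e = dotL (ZMod 2) u (c (e : ℕ)) :=
    fun u e => rfl
  -- minimum weight at least 3
  have minwt : ∀ u ∈ U, φS u ≠ 0 →
      3 ≤ (S.filter (fun e => dotL (ZMod 2) u (c e) ≠ 0)).card := by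
    intro u hu hφ
    have huE : ∀ e ∈ E \ (↑S : Set ℕ), dotL (ZMod 2) u (c e) = 0 := (hUmem u).mp hu
    by_contra hlt
    push_neg at hlt
    set flt := S.filter (fun e => dotL (ZMod 2) u (c e) ≠ 0) with hflt
    have hmem : ∀ e, e ∈ flt ↔ e ∈ S ∧ dotL (ZMod 2) u (c e) ≠ 0 :=
      fun e => Finset.mem_filter
    have hcard : flt.card ≤ 2 := by omega
    have hney : flt.Nonempty := by
      rcases Finset.eq_empty_or_nonempty flt with h | h
      · exfalso
        apply hφ
        funext e
        rw [hφSapp u e, Pi.zero_apply]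
        by_contra hne0
        have : (e : ℕ) ∈ flt := (hmem _).mpr ⟨e.2, hne0⟩
        rw [h] at this
        exact Finset.notMem_empty _ this
      · exact h
    have hcov : ∃ a ∈ S, ∃ b ∈ S,
        ∀ e ∈ S, dotL (ZMod 2) u (c e) ≠ 0 → e = a ∨ e = b := by
      rcases Nat.lt_or_ge flt.card 2 with h2 | h2
      · obtain ⟨a0, ha0⟩ := hney
        obtain ⟨x, hx⟩ := Finset.card_eq_one.mp
          (le_antisymm (by omega) (Finset.card_pos.mpr ⟨a0, ha0⟩))
        have hxS : x ∈ S := by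
          have : x ∈ flt := by rw [hx]; exact Finset.mem_singleton_self x
          exact ((hmem x).mp this).1
        refine ⟨x, hxS, x, hxS, fun e heS hne0 => Or.inl ?_⟩
        have he : e ∈ flt := (hmem e).mpr ⟨heS, hne0⟩
        rw [hx, Finset.mem_singleton] at he
        exact he
      · obtain ⟨x, y, hxy, hset⟩ := Finset.card_eq_two.mp (le_antisymm hcard h2)
        have hxS : x ∈ S := by
          have : x ∈ flt := by rw [hset]; exact Finset.mem_insert_self x {y}
          exact ((hmem x).mp this).1
        have hyS : y ∈ S := by
          have : y ∈ flt := by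
            rw [hset]; exact Finset.mem_insert_of_mem (Finset.mem_singleton_self y)
          exact ((hmem y).mp this).1
        refine ⟨x, hxS, y, hyS, fun e heS hne0 => ?_⟩
        have he : e ∈ flt := (hmem e).mpr ⟨heS, hne0⟩
        rw [hset] at he
        simpa using he
    obtain ⟨a, haS, b, hbS, hcov⟩ := hcov
    have hIab : ({a, b} : Set ℕ) ⊆ E := by
      intro x hx
      rcases hx with rfl | hx
      · exact hSE haS
      · rw [Set.mem_singleton_iff] at hx
        subst hx
        exact hSE hbS
    have hspan := (bridge {a, b} hIab).mp (hpairs a haS b hbS)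
    have hvanish : ∀ e ∈ E, dotL (ZMod 2) u (c e) = 0 := by
      intro e heE
      have h0 : ∀ v ∈ c '' (E \ {a, b}), dotL (ZMod 2) u v = 0 := by
        rintro _ ⟨f, ⟨hfE, hfab⟩, rfl⟩
        by_cases hfS : f ∈ S
        · by_contra hne0
          rcases hcov f hfS hne0 with rfl | rfl
          · exact hfab (Set.mem_insert _ _)
          · exact hfab (Set.mem_insert_of_mem _ rfl)
        · exact huE f ⟨hfE, hfS⟩
      have hmem2 : c e ∈ Submodule.span (ZMod 2) (c '' (E \ {a, b})) := by
        rw [hspan]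
        exact Submodule.subset_span ⟨e, heE, rfl⟩
      exact dotL_eq_zero_of_span h0 hmem2
    apply hφ
    funext e
    rw [hφSapp u e, Pi.zero_apply]
    exact hvanish _ (hSE e.2)
  -- greedy bound : S.card ≤ s + finrank
  have greedy : S.card ≤ s + Module.finrank (ZMod 2) C0 := by
    have main : ∀ T : Finset ℕ, ↑T ⊆ (S : Set ℕ) →
        ∃ I : Finset ℕ, I ⊆ T ∧
          Submodule.span (ZMod 2) (c '' (E \ ↑I)) = Submodule.span (ZMod 2) (c '' E) ∧
          ∀ e ∈ T \ I, ∃ u : Fin p → ZMod 2,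
            (∀ f ∈ E, f ∉ (↑I : Set ℕ) ∪ {e} → dotL (ZMod 2) u (c f) = 0) ∧
            dotL (ZMod 2) u (c e) ≠ 0 := by
      intro T
      induction T using Finset.induction_on with
      | empty =>
          intro _
          exact ⟨∅, Finset.Subset.refl _, by simp, by simp⟩
      | @insert a T haT IH =>
          intro hsub
          have hTsub : ↑T ⊆ (S : Set ℕ) := by
            refine Set.Subset.trans ?_ hsub
            intro x hx
            simp only [Finset.coe_insert, Set.mem_insert_iff]
            right; exact hx
          obtain ⟨I, hIT, hIspan, hIw⟩ := IH hTsub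
          by_cases hsp :
              Submodule.span (ZMod 2) (c '' (E \ ↑(insert a I))) =
                Submodule.span (ZMod 2) (c '' E)
          · refine ⟨insert a I, Finset.insert_subset_insert a hIT, hsp, ?_⟩
            intro e he
            rw [Finset.mem_sdiff, Finset.mem_insert] at he
            obtain ⟨hea | heT, henotI⟩ := he
            · exfalso; exact henotI (by rw [hea]; exact Finset.mem_insert_self a I)
            · have heTI : e ∈ T \ I := Finset.mem_sdiff.mpr
                ⟨heT, fun h => henotI (Finset.mem_insert_of_mem h)⟩
              obtain ⟨u, hu0, hu1⟩ := hIw e heTI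
              refine ⟨u, fun f hf hfnot => hu0 f hf ?_, hu1⟩
              intro hfmem
              apply hfnot
              rcases hfmem with hfI | hfe
              · exact Or.inl (by
                  simp only [Finset.coe_insert, Set.mem_insert_iff]
                  right; exact hfI)
              · exact Or.inr hfe
          · refine ⟨I, hIT.trans (Finset.subset_insert a T), hIspan, ?_⟩
            intro e he
            rw [Finset.mem_sdiff, Finset.mem_insert] at he
            obtain ⟨hea | heT, henotI⟩ := he
            · subst hea
              have hle : Submodule.span (ZMod 2) (c '' (E \ ↑(insert e I))) ≤
                  Submodule.span (ZMod 2) (c '' (E \ ↑I)) := by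
                refine Submodule.span_mono (Set.image_mono ?_)
                refine Set.diff_subset_diff_right ?_
                intro x hx
                simp only [Finset.coe_insert, Set.mem_insert_iff]
                right; exact hx
              have hlt : Submodule.span (ZMod 2) (c '' (E \ ↑(insert e I))) <
                  Submodule.span (ZMod 2) (c '' (E \ ↑I)) :=
                lt_of_le_of_ne hle (fun heq => hsp (heq.trans hIspan))
              obtain ⟨u, hup, y, hyq, huy⟩ := exists_dot_functional hlt
              have hnonzero : dotL (ZMod 2) u (c e) ≠ 0 := by
                have hex : ∃ f ∈ E \ (↑I : Set ℕ), dotL (ZMod 2) u (c f) ≠ 0 := by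
                  by_contra hcon
                  push_neg at hcon
                  have : ∀ v ∈ c '' (E \ (↑I : Set ℕ)), dotL (ZMod 2) u v = 0 := by
                    rintro _ ⟨f, hf, rfl⟩
                    exact hcon f hf
                  exact huy (dotL_eq_zero_of_span this hyq)
                obtain ⟨f, ⟨hfE, hfI⟩, hfne⟩ := hex
                have hfa : f = e := by
                  by_contra hfa
                  refine hfne (hup _ ?_)
                  refine Submodule.subset_span ⟨f, ⟨hfE, ?_⟩, rfl⟩
                  simp only [Finset.coe_insert, Set.mem_insert_iff]
                  push_neg
                  exact ⟨hfa, hfI⟩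
                rwa [hfa] at hfne
              refine ⟨u, fun f hf hfnot => hup (c f) ?_, hnonzero⟩
              refine Submodule.subset_span ⟨f, ⟨hf, ?_⟩, rfl⟩
              simp only [Finset.coe_insert, Set.mem_insert_iff]
              push_neg
              constructor
              · intro hfe; exact hfnot (Or.inr hfe)
              · intro hfI; exact hfnot (Or.inl hfI)
            · obtain ⟨u, hu0, hu1⟩ := hIw e (Finset.mem_sdiff.mpr ⟨heT, henotI⟩)
              exact ⟨u, hu0, hu1⟩
    obtain ⟨I, hIT, hIspan, hIw⟩ := main S (le_refl _)
    have hIindep : N.Indep ↑I :=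
      (bridge ↑I ((Finset.coe_subset.mpr hIT).trans hSE)).mpr hIspan
    have hIcard : I.card ≤ s := hrk I (Finset.coe_subset.mpr hIT) hIindep
    -- triangular family bound
    have hmemC0 : ∀ e : ↥(S \ I), ∀ (he : (e : ℕ) ∈ S \ I)
        (u : Fin p → ZMod 2),
        (∀ f ∈ E, f ∉ (↑I : Set ℕ) ∪ {(e : ℕ)} → dotL (ZMod 2) u (c f) = 0) →
        φS u ∈ C0 := by
      intro e he u hu0
      refine Submodule.mem_map_of_mem ?_
      rw [hUmem]
      intro f hf
      refine hu0 f hf.1 ?_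
      intro hmem
      apply hf.2
      rcases hmem with hfI | hfe
      · exact Finset.coe_subset.mpr hIT hfI
      · rw [hfe]
        exact (Finset.mem_sdiff.mp e.2).1
    choose u hu0 hu1 using hIw
    have hli : LinearIndependent (ZMod 2)
        (fun e : ↥(S \ I) => φS (u (e : ℕ) e.2)) := by
      rw [Fintype.linearIndependent_iff]
      intro g hg e0
      have he0SI := Finset.mem_sdiff.mp e0.2
      have he0S : (e0 : ℕ) ∈ S := he0SI.1
      have hsum : ∑ e : ↥(S \ I),
          g e * dotL (ZMod 2) (u (e : ℕ) e.2) (c (e0 : ℕ)) = 0 := by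
        have hcf := congrFun hg (⟨(e0 : ℕ), he0S⟩ : ↥S)
        simpa [Finset.sum_apply, Pi.smul_apply, smul_eq_mul, hφSapp] using hcf
      rw [Finset.sum_eq_single e0] at hsum
      · rcases mul_eq_zero.mp hsum with h | h
        · exact h
        · exact absurd h (hu1 (e0 : ℕ) e0.2)
      · intro e _ hne
        have hnotmem : (e0 : ℕ) ∉ (↑I : Set ℕ) ∪ {(e : ℕ)} := by
          intro hmem
          rcases hmem with hfI | hfe
          · exact he0SI.2 hfI
          · exact hne (Subtype.ext (Set.mem_singleton_iff.mp hfe).symm)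
        rw [hu0 (e : ℕ) e.2 (e0 : ℕ) (hSE he0S) hnotmem, mul_zero]
      · intro h; exact absurd (Finset.mem_univ e0) h
    have hli2 : LinearIndependent (ZMod 2)
        (fun e : ↥(S \ I) =>
          (⟨φS (u (e : ℕ) e.2), hmemC0 e e.2 _ (hu0 (e : ℕ) e.2)⟩ : ↥C0)) :=
      hli.of_comp C0.subtype
    have hcardle : (S \ I).card ≤ Module.finrank (ZMod 2) C0 := by
      have := hli2.fintype_card_le_finrank
      simpa [Fintype.card_coe] using this
    have := Finset.card_sdiff_add_card_eq_card hIT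
    omega
  -- degree bound
  have degree : 3 * Module.finrank (ZMod 2) C0 ≤ 2 * S.card := by
    letI st : Setoid (Fin p) := ⟨fun i j => ∀ u ∈ U, u i = u j,
      ⟨fun _ _ _ => rfl, fun h u hu => (h u hu).symm,
        fun h1 h2 u hu => (h1 u hu).trans (h2 u hu)⟩⟩
    haveI : DecidableEq (Quotient st) := fun _ _ => Classical.propDecidable _
    haveI : Fintype (Quotient st) :=
      @Quotient.fintype _ _ st (fun _ _ => Classical.propDecidable _)
    set Z : Set (Fin p) := {i | ∀ u ∈ U, u i = 0} with hZ
    set χ : Quotient st → (Fin p → ZMod 2) :=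
      fun q => fun j => if Quotient.mk st j = q then 1 else 0 with hχ
    set suppF : ℕ → Finset (Fin p) :=
      fun e => Finset.univ.filter (fun i => c e i ≠ 0) with hsuppF
    have hsupp2 : ∀ e ∈ E, (suppF e).card ≤ 2 := by
      intro e heE
      have hwte : {i | G i e ≠ 0}.ncard ≤ 2 := hwt e (by rwa [hEdual])
      have hset : {i | G i e ≠ 0} = ↑(suppF e) := by
        ext i; simp [hsuppF, hc]
      rwa [hset, Set.ncard_coe_finset] at hwte
    have hdotsum : ∀ (u : Fin p → ZMod 2) (e : ℕ),
        dotL (ZMod 2) u (c e) = ∑ i ∈ suppF e, u i :=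
      fun u e => dot_eq_sum_supp u (c e)
    -- classes give elements of U
    have hχU : ∀ q : Quotient st, Quotient.out q ∉ Z → χ q ∈ U := by
      intro q hq
      rw [hUmem]
      intro e heES
      rw [hdotsum]
      have hcard2 : (suppF e).card ≤ 2 := hsupp2 e heES.1
      have hconstraint : ∀ u ∈ U, ∑ i ∈ suppF e, u i = 0 := by
        intro u hu
        rw [← hdotsum]
        exact (hUmem u).mp hu e heES
      rcases Nat.lt_or_ge (suppF e).card 1 with h1 | h1
      · have hempty : suppF e = ∅ := Finset.card_eq_zero.mp (by omega)
        rw [hempty]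
        exact Finset.sum_empty
      rcases Nat.lt_or_ge (suppF e).card 2 with h2 | h2
      · obtain ⟨j, hj⟩ := Finset.card_eq_one.mp (show (suppF e).card = 1 by omega)
        rw [hj, Finset.sum_singleton]
        have hjZ : j ∈ Z := by
          intro u hu
          have := hconstraint u hu
          rwa [hj, Finset.sum_singleton] at this
        have : ¬ (Quotient.mk st j = q) := by
          intro hmk
          apply hq
          have hrel : st.r (Quotient.out q) j := by
            apply Quotient.exact
            rw [Quotient.out_eq, ← hmk]
          intro u hu
          rw [hrel u hu]
          exact hjZ u hu
        simp [hχ, this]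
      · obtain ⟨j, l, hjl, hset⟩ := Finset.card_eq_two.mp (le_antisymm hcard2 h2)
        have hrel : st.r j l := by
          intro u hu
          have := hconstraint u hu
          rw [hset, Finset.sum_insert (by simpa using hjl), Finset.sum_singleton] at this
          exact (zmod2_add_eq_zero _ _).mp this
        have hmkeq : Quotient.mk st j = Quotient.mk st l := Quotient.sound hrel
        rw [hset, Finset.sum_insert (by simpa using hjl), Finset.sum_singleton]
        have : χ q j = χ q l := by simp only [hχ, hmkeq]
        rw [this]
        exact (zmod2_add_eq_zero _ _).mpr rfl
    set A : Finset (Quotient st) :=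
      Finset.univ.filter (fun q => Quotient.out q ∉ Z ∧ φS (χ q) ≠ 0) with hA
    -- C0 is spanned by the class vectors
    have hφdecomp : ∀ u ∈ U, φS u =
        ∑ q ∈ A, u (Quotient.out q) • φS (χ q) := by
      intro u hu
      have hdec : u = ∑ q : Quotient st, u (Quotient.out q) • χ q := by
        funext j
        rw [Finset.sum_apply]
        have hterm : ∀ q : Quotient st, (u (Quotient.out q) • χ q) j =
            if Quotient.mk st j = q then u (Quotient.out q) else 0 := by
          intro q
          rw [Pi.smul_apply, smul_eq_mul]
          by_cases hmk : Quotient.mk st j = q <;> simp [hχ, hmk]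
        rw [Finset.sum_congr rfl (fun q _ => hterm q), Finset.sum_ite_eq]
        simp only [Finset.mem_univ, if_true]
        have hrel : st.r (Quotient.out (Quotient.mk st j)) j := by
          apply Quotient.exact
          rw [Quotient.out_eq]
        exact (hrel u hu).symm
      have hφdec : φS u = ∑ q : Quotient st, u (Quotient.out q) • φS (χ q) := by
        conv_lhs => rw [hdec]
        rw [map_sum]
        exact Finset.sum_congr rfl (fun q _ => by rw [map_smul])
      rw [hφdec]
      rw [← Finset.sum_subset (Finset.subset_univ A) ?hvanish]
      case hvanish =>
        intro q _ hqA
        rw [hA] at hqA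
        simp only [Finset.mem_filter, Finset.mem_univ, true_and, not_and_or] at hqA
        rcases hqA with hqZ | hqzero
        · have : Quotient.out q ∈ Z := not_not.mp hqZ
          rw [this u hu, zero_smul]
        · rw [not_not.mp hqzero, smul_zero]
    have hfr : Module.finrank (ZMod 2) C0 ≤ A.card := by
      set L : (↥A → ZMod 2) →ₗ[ZMod 2] (↥S → ZMod 2) :=
        { toFun := fun g => ∑ q : ↥A, g q • φS (χ (q : Quotient st)),
          map_add' := by
            intro g h
            simp [add_smul, Finset.sum_add_distrib]
          map_smul' := by
            intro t g
            simp [smul_smul, Finset.smul_sum] } with hL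
      have hC0le : C0 ≤ LinearMap.range L := by
        rintro w hw
        obtain ⟨u, hu, rfl⟩ := Submodule.mem_map.mp hw
        refine ⟨fun q => u (Quotient.out (q : Quotient st)), ?_⟩
        have happ : L (fun q => u (Quotient.out (q : Quotient st))) =
            ∑ q : ↥A, u (Quotient.out (q : Quotient st)) • φS (χ (q : Quotient st)) := rfl
        rw [happ, Finset.sum_coe_sort A (fun q => u (Quotient.out q) • φS (χ q))]
        exact (hφdecomp u hu).symm
      have hr1 : Module.finrank (ZMod 2) C0 ≤
          Module.finrank (ZMod 2) (LinearMap.range L) := Submodule.finrank_mono hC0le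
      have hr2 : Module.finrank (ZMod 2) (LinearMap.range L) ≤
          Module.finrank (ZMod 2) (↥A → ZMod 2) := LinearMap.finrank_range_le L
      have hr3 : Module.finrank (ZMod 2) (↥A → ZMod 2) = A.card := by
        rw [Module.finrank_pi]
        exact Fintype.card_coe A
      omega
    -- each class vector has weight at least 3
    have hwt3 : ∀ q ∈ A, 3 ≤ (S.filter (fun e => dotL (ZMod 2) (χ q) (c e) ≠ 0)).card := by
      intro q hq
      rw [hA] at hq
      simp only [Finset.mem_filter, Finset.mem_univ, true_and] at hq
      exact minwt (χ q) (hχU q hq.1) hq.2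
    -- double counting
    have hdc : ∑ q ∈ A, (S.filter (fun e => dotL (ZMod 2) (χ q) (c e) ≠ 0)).card ≤
        2 * S.card := by
      have hswap : ∑ q ∈ A, (S.filter (fun e => dotL (ZMod 2) (χ q) (c e) ≠ 0)).card =
          ∑ e ∈ S, (A.filter (fun q => dotL (ZMod 2) (χ q) (c e) ≠ 0)).card := by
        simp only [Finset.card_filter]
        rw [Finset.sum_comm]
      rw [hswap]
      have hperE : ∀ e ∈ S, (A.filter (fun q => dotL (ZMod 2) (χ q) (c e) ≠ 0)).card ≤ 2 := by
        intro e heS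
        have hsurj : Set.SurjOn (fun i => Quotient.mk st i) ↑(suppF e)
            ↑(A.filter (fun q => dotL (ZMod 2) (χ q) (c e) ≠ 0)) := by
          intro q hq
          have hne := (Finset.mem_filter.mp hq).2
          rw [hdotsum] at hne
          obtain ⟨i, hi, hine⟩ := Finset.exists_ne_zero_of_sum_ne_zero hne
          refine ⟨i, hi, ?_⟩
          by_contra hmk
          apply hine
          simp [hχ, hmk]
        exact (Finset.card_le_card_of_surjOn _ hsurj).trans (hsupp2 e (hSE heS))
      calc ∑ e ∈ S, (A.filter (fun q => dotL (ZMod 2) (χ q) (c e) ≠ 0)).card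
          ≤ S.card • 2 := Finset.sum_le_card_nsmul _ _ _ hperE
        _ = 2 * S.card := by rw [smul_eq_mul, mul_comm]
    have h3A : 3 * A.card ≤ 2 * S.card := by
      have := Finset.card_nsmul_le_sum A _ 3 hwt3
      rw [smul_eq_mul, mul_comm] at this
      exact le_trans this hdc
    have := Nat.mul_le_mul_left 3 hfr
    omega
  omega

end Cographic
section Qside

lemma FamIndep.ncard_le_finrank {F : Type} [Field F] {V : Type*} [AddCommGroup V]
    [Module F V] {c : ℕ → V} {I : Set ℕ} (h : FamIndep F c I) (hfin : I.Finite)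
    {W : Submodule F V} [Module.Finite F W] (hsub : ∀ e ∈ I, c e ∈ W) :
    I.ncard ≤ Module.finrank F W := by
  letI := hfin.fintype
  have hli : LinearIndependent F (fun e : I => (⟨c e, hsub e e.2⟩ : W)) :=
    LinearIndependent.of_comp W.subtype h
  have hcard := hli.fintype_card_le_finrank
  rwa [Set.ncard_eq_toFinset_card' I, Set.toFinset_card]

lemma qside {r : ℕ} {Q : Matroid ℕ} (hQ : IsCycleMatroidOfCompleteGraph r Q) :
    Q.E.Finite ∧ Q.E.ncard = (r + 1).choose 2 ∧
      (∀ x ∈ Q.E, ∀ y ∈ Q.E, Q.Indep {x, y}) ∧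
      (∀ I ⊆ Q.E, Q.Indep I → I.ncard ≤ r) := by
  classical
  obtain ⟨f, hbij, hind⟩ := hQ
  set cQ : ℕ → (Fin (r + 1) → ZMod 2) :=
    fun j => fun v => if v ∈ f j then 1 else 0 with hcQ
  have hindep : ∀ I ⊆ Q.E, (Q.Indep I ↔ FamIndep (ZMod 2) cQ I) := hind
  -- ground set is finite
  have hQfin : Q.E.Finite := by
    have himg : (f '' Q.E).Finite := Set.toFinite _
    exact Set.Finite.of_finite_image (hbij.image_eq ▸ Set.toFinite _) hbij.injOn
  -- nonzero columns
  have hne0 : ∀ j, cQ j ≠ 0 := by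
    intro j h
    have h1 := congrFun h (f j).out.1
    simp only [hcQ, Sym2.out_fst_mem, if_true, Pi.zero_apply] at h1
    exact one_ne_zero h1
  -- injectivity
  have hcQinj : ∀ x y, cQ x = cQ y → f x = f y := by
    intro x y h
    apply Sym2.ext
    intro v
    have h1 := congrFun h v
    simp only [hcQ] at h1
    constructor <;> intro hv
    · by_contra hv2
      rw [if_pos hv, if_neg hv2] at h1
      exact one_ne_zero h1
    · by_contra hv2
      rw [if_neg hv2, if_pos hv] at h1
      exact one_ne_zero h1.symm
  -- pairs are independent
  have hpairs : ∀ x ∈ Q.E, ∀ y ∈ Q.E, Q.Indep {x, y} := by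
    intro x hx y hy
    have hsub : ({x, y} : Set ℕ) ⊆ Q.E := by
      intro z hz
      rcases hz with rfl | hz
      · exact hx
      · rw [Set.mem_singleton_iff] at hz; subst hz; exact hy
    rw [hindep _ hsub]
    by_cases hxy : x = y
    · subst hxy
      rw [Set.pair_eq_singleton]
      exact famIndep_singleton (hne0 x)
    · refine famIndep_pair_zmod2 hxy (hne0 y) ?_ (hne0 x)
      intro heq
      exact hxy (hbij.injOn hx hy (hcQinj x y heq))
  -- all-ones functional
  set ℓ : (Fin (r + 1) → ZMod 2) →ₗ[ZMod 2] ZMod 2 :=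
    dotL (ZMod 2) (fun _ => 1) with hℓ
  have hsum : ∀ p : Sym2 (Fin (r + 1)), ¬ p.IsDiag →
      ∑ v, (if v ∈ p then (1 : ZMod 2) else 0) = 0 := by
    intro p
    induction p using Sym2.ind with
    | _ a b =>
      intro hd
      have hab : a ≠ b := by
        intro h; exact hd (by rw [h]; exact Sym2.mk_isDiag_iff.mpr rfl)
      have hrw : ∀ v : Fin (r + 1),
          (if v ∈ s(a, b) then (1 : ZMod 2) else 0) =
            if v ∈ ({a, b} : Finset (Fin (r + 1))) then 1 else 0 := by
        intro v
        refine if_congr ?_ rfl rfl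
        simp [Sym2.mem_iff]
      rw [Finset.sum_congr rfl (fun v _ => hrw v), Finset.sum_ite_mem,
        Finset.univ_inter, Finset.sum_const, Finset.card_insert_of_notMem
          (by simpa using hab), Finset.card_singleton]
      decide
  have hker : ∀ j ∈ Q.E, cQ j ∈ LinearMap.ker ℓ := by
    intro j hj
    rw [LinearMap.mem_ker, hℓ, dotL_apply]
    have : ∀ v : Fin (r + 1), (1 : ZMod 2) * cQ j v = if v ∈ f j then 1 else 0 := by
      intro v; rw [one_mul]
    rw [Finset.sum_congr rfl (fun v _ => this v)]
    exact hsum (f j) (hbij.mapsTo hj)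
  have hkerne : LinearMap.ker ℓ ≠ ⊤ := by
    intro h
    have h0 : Pi.single (0 : Fin (r + 1)) (1 : ZMod 2) ∈ LinearMap.ker ℓ := by
      rw [h]; trivial
    rw [LinearMap.mem_ker, hℓ, dotL_apply] at h0
    simp [Pi.single_apply] at h0
  have hkerrank : Module.finrank (ZMod 2) (LinearMap.ker ℓ) ≤ r := by
    have hlt := Submodule.finrank_lt (K := ZMod 2) (V := Fin (r + 1) → ZMod 2)
      hkerne
    have htot : Module.finrank (ZMod 2) (Fin (r + 1) → ZMod 2) = r + 1 := by
      rw [Module.finrank_pi]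
      simp
    omega
  -- rank bound
  have hrank : ∀ I ⊆ Q.E, Q.Indep I → I.ncard ≤ r := by
    intro I hI hIind
    have hfam : FamIndep (ZMod 2) cQ I := (hindep I hI).mp hIind
    have := hfam.ncard_le_finrank (hQfin.subset hI) (fun e he => hker e (hI he))
    omega
  -- cardinality of the ground set
  have hcard : Q.E.ncard = (r + 1).choose 2 := by
    have h1 : (f '' Q.E).ncard = Q.E.ncard := Set.ncard_image_of_injOn hbij.injOn
    rw [← h1, hbij.image_eq]
    rw [← Nat.card_coe_set_eq, Nat.card_eq_fintype_card]
    have h2 : Fintype.card {p : Sym2 (Fin (r + 1)) // ¬ p.IsDiag} =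
        (Fintype.card (Fin (r + 1))).choose 2 := Sym2.card_subtype_not_diag
    rw [Fintype.card_fin] at h2
    rw [← h2]
    exact Fintype.card_congr (Equiv.subtypeEquivRight (fun _ => Iff.rfl))
  exact ⟨hQfin, hcard, hpairs, hrank⟩

end Qside
section MainBound

set_option maxHeartbeats 1600000 in
lemma main_bound {r k : ℕ}
    (h : ∃ Q N : Matroid ℕ, IsCycleMatroidOfCompleteGraph r Q ∧ IsCographic N ∧
      IsRankLePerturbation k Q N) :
    (r + 1).choose 2 ≤ (3 * (r + k) + 1) * 2 ^ k := by
  classical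
  obtain ⟨Q, N, hQ, hcog, m, Ecols, A₁, A₂, N₁, N₂, hN₁, hN₂, hQN₁, hNN₂, hrankW⟩ := h
  obtain ⟨hQfin, hQcard, hQpairs, hQrank⟩ := qside hQ
  set c1 : ℕ → (Fin m → ZMod 2) := fun j => fun i => A₁ i j with hc1
  set c2 : ℕ → (Fin m → ZMod 2) := fun j => fun i => A₂ i j with hc2
  set d : ℕ → (Fin m → ZMod 2) := fun j => fun i => A₁ i j - A₂ i j with hd
  set W := Submodule.span (ZMod 2) (d '' ↑Ecols) with hW
  obtain ⟨hN₁E, hN₁ind⟩ := hN₁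
  obtain ⟨hN₂E, hN₂ind⟩ := hN₂
  obtain ⟨f₁, hbij₁, hind₁⟩ := hQN₁
  obtain ⟨f₂, hbij₂, hind₂⟩ := hNN₂
  rw [hN₁E] at hbij₁
  rw [hN₂E] at hbij₂
  -- c1 is "simple" on Ecols
  have hc1pair : ∀ a ∈ (↑Ecols : Set ℕ), ∀ b ∈ (↑Ecols : Set ℕ),
      FamIndep (ZMod 2) c1 {a, b} := by
    intro a ha b hb
    obtain ⟨x, hx, rfl⟩ := hbij₁.surjOn ha
    obtain ⟨y, hy, rfl⟩ := hbij₁.surjOn hb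
    have hsub : ({x, y} : Set ℕ) ⊆ Q.E := by
      intro z hz
      rcases hz with rfl | hz
      · exact hx
      · rw [Set.mem_singleton_iff] at hz; subst hz; exact hy
    have hN₁i : N₁.Indep (f₁ '' {x, y}) := (hind₁ _ hsub).mp (hQpairs x hx y hy)
    rw [Set.image_pair] at hN₁i
    exact ((hN₁ind _).mp hN₁i).2
  have hc1ne : ∀ a ∈ (↑Ecols : Set ℕ), c1 a ≠ 0 := by
    intro a ha
    exact (hc1pair a ha a ha).nonzero (Set.mem_insert a _)
  have hc1inj : Set.InjOn c1 ↑Ecols := by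
    intro a ha b hb hab
    exact (hc1pair a ha b hb).injOn (Set.mem_insert a _)
      (Set.mem_insert_of_mem a rfl) hab
  -- rank of the A₁ columns is at most r
  have hspan1 : Module.finrank (ZMod 2)
      (Submodule.span (ZMod 2) (c1 '' ↑Ecols)) ≤ r := by
    obtain ⟨B, hBsub, hBind, hBspan⟩ :=
      exists_famIndep_spanning (F := ZMod 2) c1 ↑Ecols
    have hBN₁ : N₁.Indep B := (hN₁ind B).mpr ⟨hBsub, hBind⟩
    set J := Q.E ∩ f₁ ⁻¹' B with hJ
    have himg : f₁ '' J = B := by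
      apply Set.Subset.antisymm
      · rintro _ ⟨z, ⟨hzE, hzB⟩, rfl⟩; exact hzB
      · intro b hb
        obtain ⟨z, hzE, rfl⟩ := hbij₁.surjOn (hBsub hb)
        exact ⟨z, ⟨hzE, hb⟩, rfl⟩
    have hQJ : Q.Indep J := by
      rw [hind₁ J Set.inter_subset_left, himg]
      exact hBN₁
    have hBcard : B.ncard ≤ r := by
      rw [← himg, Set.ncard_image_of_injOn (hbij₁.injOn.mono Set.inter_subset_left)]
      exact hQrank J Set.inter_subset_left hQJ
    rw [← hBspan]
    have hBfin : B.Finite := Ecols.finite_toSet.subset hBsub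
    have hcBfin : (c1 '' B).Finite := hBfin.image c1
    letI := hcBfin.fintype
    have h1 := finrank_span_le_card (R := ZMod 2) (c1 '' B)
    rw [← Set.ncard_eq_toFinset_card'] at h1
    exact h1.trans ((Set.ncard_image_le hBfin).trans hBcard)
  -- rank of the A₂ columns is at most r + k
  have hspan2 : Module.finrank (ZMod 2)
      (Submodule.span (ZMod 2) (c2 '' ↑Ecols)) ≤ r + k := by
    have hle : Submodule.span (ZMod 2) (c2 '' ↑Ecols) ≤
        Submodule.span (ZMod 2) (c1 '' ↑Ecols) ⊔ W := by
      rw [Submodule.span_le]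
      rintro _ ⟨e, he, rfl⟩
      have h1 : c1 e ∈ Submodule.span (ZMod 2) (c1 '' ↑Ecols) ⊔ W :=
        Submodule.mem_sup_left (Submodule.subset_span ⟨e, he, rfl⟩)
      have h2 : d e ∈ Submodule.span (ZMod 2) (c1 '' ↑Ecols) ⊔ W :=
        Submodule.mem_sup_right (Submodule.subset_span ⟨e, he, rfl⟩)
      have : c2 e = c1 e - d e := by
        funext i
        simp [hc1, hc2, hd]
      rw [this]
      exact Submodule.sub_mem _ h1 h2
    have h3 := Submodule.finrank_mono hle
    have h4 := Submodule.finrank_sup_add_finrank_inf_eq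
      (Submodule.span (ZMod 2) (c1 '' ↑Ecols)) W
    omega
  -- the fibers of c2 have size at most 2^k
  letI : Fintype ↥W := Fintype.ofEquiv _ (Module.finBasis (ZMod 2) ↥W).equivFun.toEquiv.symm
  have hWcard : Fintype.card ↥W ≤ 2 ^ k := by
    have h1 : Fintype.card ↥W = 2 ^ Module.finrank (ZMod 2) ↥W := by
      rw [Fintype.card_congr (Module.finBasis (ZMod 2) ↥W).equivFun.toEquiv]
      simp [ZMod.card]
    rw [h1]
    exact Nat.pow_le_pow_right (by norm_num) hrankW
  set T := Ecols.image c2 with hT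
  have hcount : Ecols.card ≤ T.card * 2 ^ k := by
    rw [Finset.card_eq_sum_card_fiberwise
      (fun e he => Finset.mem_image_of_mem c2 he), ← hT]
    have hfib : ∀ t ∈ T, (Ecols.filter (fun e => c2 e = t)).card ≤ 2 ^ k := by
      intro t ht
      set dW : ℕ → ↥W := fun e =>
        if he : e ∈ Ecols then ⟨d e, Submodule.subset_span ⟨e, he, rfl⟩⟩ else 0 with hdW
      have hinjfib : Set.InjOn dW ↑(Ecols.filter (fun e => c2 e = t)) := by
        intro a ha b hb hab
        rw [Finset.coe_filter, Set.mem_setOf_eq] at ha hb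
        rw [hdW] at hab
        simp only [dif_pos ha.1, dif_pos hb.1] at hab
        have hdab : d a = d b := congrArg Subtype.val hab
        have hc2ab : c2 a = c2 b := ha.2.trans hb.2.symm
        have hc1ab : c1 a = c1 b := by
          funext i
          have h5 := congrFun hdab i
          have h6 := congrFun hc2ab i
          simp only [hd, hc2] at h5 h6
          simp only [hc1]
          linear_combination h5 + h6
        exact hc1inj (Finset.mem_coe.mpr ha.1) (Finset.mem_coe.mpr hb.1) hc1ab
      have := Finset.card_le_card_of_injOn dW (fun a _ => Finset.mem_univ (dW a)) hinjfib
      calc (Ecols.filter (fun e => c2 e = t)).card ≤ (Finset.univ : Finset ↥W).card := this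
        _ = Fintype.card ↥W := Finset.card_univ
        _ ≤ 2 ^ k := hWcard
    calc ∑ t ∈ T, (Ecols.filter (fun e => c2 e = t)).card ≤ T.card • 2 ^ k :=
        Finset.sum_le_card_nsmul _ _ _ hfib
      _ = T.card * 2 ^ k := by rw [smul_eq_mul]
  -- representatives of the nonzero fibers
  set T' := T.erase 0 with hT'
  have hrepmem : ∀ t : ↥T', ∃ e ∈ Ecols, c2 e = (t : Fin m → ZMod 2) := by
    intro t
    exact Finset.mem_image.mp (Finset.mem_of_mem_erase
      (show (t : Fin m → ZMod 2) ∈ T.erase 0 from t.2))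
  choose rep hrep1 hrep2 using hrepmem
  set S : Finset ℕ := T'.attach.image rep with hS
  have hScard : S.card = T'.card := by
    rw [hS, Finset.card_image_of_injOn, Finset.card_attach]
    intro t _ t' _ htt
    have : (t : Fin m → ZMod 2) = t' := by rw [← hrep2 t, ← hrep2 t', htt]
    exact Subtype.ext this
  have hSsub : ↑S ⊆ (↑Ecols : Set ℕ) := by
    intro a ha
    rw [hS] at ha
    obtain ⟨t, _, rfl⟩ := Finset.mem_image.mp ha
    exact hrep1 t
  have hSne : ∀ a ∈ (↑S : Set ℕ), c2 a ≠ 0 := by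
    intro a ha
    rw [hS] at ha
    obtain ⟨t, _, rfl⟩ := Finset.mem_image.mp ha
    rw [hrep2 t]
    intro h0
    exact (Finset.mem_erase.mp
      (show (t : Fin m → ZMod 2) ∈ T.erase 0 from t.2)).1 h0
  have hSinj : Set.InjOn c2 ↑S := by
    intro a ha b hb hab
    rw [hS] at ha hb
    obtain ⟨t, _, rfl⟩ := Finset.mem_image.mp ha
    obtain ⟨t', _, rfl⟩ := Finset.mem_image.mp hb
    rw [hrep2 t, hrep2 t'] at hab
    rw [Subtype.ext hab]
  -- pull S back into N
  set J := N.E ∩ f₂ ⁻¹' ↑S with hJ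
  have himgJ : f₂ '' J = ↑S := by
    apply Set.Subset.antisymm
    · rintro _ ⟨z, ⟨hzE, hzB⟩, rfl⟩; exact hzB
    · intro b hb
      obtain ⟨z, hzE, rfl⟩ := hbij₂.surjOn (hSsub hb)
      exact ⟨z, ⟨hzE, hb⟩, rfl⟩
  have hJfin : J.Finite :=
    Set.Finite.of_finite_image (himgJ ▸ S.finite_toSet) (hbij₂.injOn.mono Set.inter_subset_left)
  set SF : Finset ℕ := hJfin.toFinset with hSF
  have hSFJ : ↑SF = J := hJfin.coe_toFinset
  have hSFsub : ↑SF ⊆ N.E := by rw [hSFJ]; exact Set.inter_subset_left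
  have hSFmem : ∀ a ∈ SF, f₂ a ∈ (↑S : Set ℕ) := by
    intro a ha
    have haJ : a ∈ J := by rw [← hSFJ]; exact_mod_cast ha
    rw [← himgJ]
    exact ⟨a, haJ, rfl⟩
  -- pairs in SF are independent in N
  have hSFpairs : ∀ a ∈ SF, ∀ b ∈ SF, N.Indep {a, b} := by
    intro a ha b hb
    have haE : a ∈ N.E := hSFsub (by exact_mod_cast ha)
    have hbE : b ∈ N.E := hSFsub (by exact_mod_cast hb)
    have hsub : ({a, b} : Set ℕ) ⊆ N.E := by
      intro z hz
      rcases hz with rfl | hz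
      · exact haE
      · rw [Set.mem_singleton_iff] at hz; subst hz; exact hbE
    rw [hind₂ _ hsub, Set.image_pair]
    refine (hN₂ind _).mpr ⟨?_, ?_⟩
    · intro z hz
      rcases hz with rfl | hz
      · exact hSsub (hSFmem a ha)
      · rw [Set.mem_singleton_iff] at hz; subst hz
        exact hSsub (hSFmem b hb)
    · by_cases hab : f₂ a = f₂ b
      · rw [hab, Set.pair_eq_singleton]
        exact famIndep_singleton (hSne _ (hSFmem b hb))
      · exact famIndep_pair_zmod2 hab (hSne _ (hSFmem b hb))
          (fun h => hab (hSinj (hSFmem a ha) (hSFmem b hb) h))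
          (hSne _ (hSFmem a ha))
  -- independent subsets of SF have at most r + k elements
  have hSFrk : ∀ I : Finset ℕ, ↑I ⊆ (SF : Set ℕ) → N.Indep ↑I → I.card ≤ r + k := by
    intro I hIsub hIind
    have hIE : (↑I : Set ℕ) ⊆ N.E := hIsub.trans hSFsub
    have hN₂i : N₂.Indep (f₂ '' ↑I) := (hind₂ _ hIE).mp hIind
    have hfam : FamIndep (ZMod 2) c2 (f₂ '' ↑I) := ((hN₂ind _).mp hN₂i).2
    have hsubE : f₂ '' ↑I ⊆ (↑Ecols : Set ℕ) := by
      rintro _ ⟨z, hz, rfl⟩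
      exact hSsub (hSFmem z (by exact_mod_cast hIsub hz))
    have hbound := hfam.ncard_le_finrank
      (Set.Finite.image f₂ (I.finite_toSet))
      (W := Submodule.span (ZMod 2) (c2 '' ↑Ecols))
      (fun e he => Submodule.subset_span ⟨e, hsubE he, rfl⟩)
    have himgcard : (f₂ '' ↑I).ncard = I.card := by
      rw [Set.ncard_image_of_injOn
        (hbij₂.injOn.mono (hIE))]
      exact Set.ncard_coe_finset I
    omega
  -- apply the key cographic lemma
  have hkey := card_le_of_cographic_simple hcog SF hSFsub hSFpairs hSFrk
  -- SF.card = S.card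
  have hSFcard : SF.card = S.card := by
    have h1 : SF.card = J.ncard := by
      rw [← hSFJ, Set.ncard_coe_finset]
    have h2 : J.ncard = (f₂ '' J).ncard :=
      (Set.ncard_image_of_injOn (hbij₂.injOn.mono Set.inter_subset_left)).symm
    rw [h1, h2, himgJ, Set.ncard_coe_finset]
  -- collect the counting
  have hEcard : Ecols.card = (r + 1).choose 2 := by
    have h1 : (f₁ '' Q.E).ncard = Q.E.ncard := Set.ncard_image_of_injOn hbij₁.injOn
    rw [hbij₁.image_eq] at h1
    rw [← hQcard, ← h1, Set.ncard_coe_finset]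
  have hT'card : T.card ≤ T'.card + 1 := by
    rw [hT']
    by_cases h0 : (0 : Fin m → ZMod 2) ∈ T
    · rw [Finset.card_erase_of_mem h0]
      have := Finset.card_pos.mpr ⟨0, h0⟩
      omega
    · rw [Finset.erase_eq_of_notMem h0]
      omega
  calc (r + 1).choose 2 = Ecols.card := hEcard.symm
    _ ≤ T.card * 2 ^ k := hcount
    _ ≤ (S.card + 1) * 2 ^ k := by
        have : T.card ≤ S.card + 1 := by omega
        exact Nat.mul_le_mul_right _ this
    _ ≤ (3 * (r + k) + 1) * 2 ^ k := by
        have : S.card ≤ 3 * (r + k) := by omega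
        exact Nat.mul_le_mul_right _ (by omega)

end MainBound

/-- For every positive integer `k`, there are at most finitely many `r`
such that `M(K_{r+1})` is a rank-`(≤ k)` perturbation of a cographic matroid. -/
theorem finitely_many_complete_graphs_perturbation_of_cographic (k : ℕ) (hk : 0 < k) :
    {r : ℕ | ∃ Q N : Matroid ℕ, IsCycleMatroidOfCompleteGraph r Q ∧ IsCographic N ∧
      IsRankLePerturbation k Q N}.Finite := by
  apply Set.Finite.subset (Set.finite_Iio (8 * 2 ^ k + 8 * k + 1))
  intro r hr
  rw [Set.mem_setOf_eq] at hr
  have hb := main_bound hr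
  rw [Set.mem_Iio]
  by_contra hge
  push_neg at hge
  have hge' : 8 * 2 ^ k + 8 * k + 1 ≤ r := hge
  have hchoose2 : (r + 1).choose 2 * 2 = (r + 1) * r := by
    rw [Nat.choose_two_right, Nat.succ_sub_one]
    refine Nat.div_mul_cancel ?_
    have h1 := Nat.even_mul_succ_self r
    rw [mul_comm] at h1
    exact h1.two_dvd
  have hmul : (r + 1) * r ≤ ((3 * (r + k) + 1) * 2 ^ k) * 2 := by
    rw [← hchoose2]
    exact Nat.mul_le_mul_right 2 hb
  obtain ⟨t, ht⟩ : ∃ t, 2 ^ k = t := ⟨_, rfl⟩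
  rw [ht] at hmul hge'
  have hstep1 : 8 * ((r + 1) * r) ≤ (16 * t) * (3 * (r + k) + 1) := by
    calc 8 * ((r + 1) * r) ≤ 8 * (((3 * (r + k) + 1) * t) * 2) :=
          Nat.mul_le_mul_left 8 hmul
      _ = (16 * t) * (3 * (r + k) + 1) := by ring
  have h16 : 16 * t ≤ 2 * r := by omega
  have hstep2 : (16 * t) * (3 * (r + k) + 1) ≤ (2 * r) * (3 * (r + k) + 1) :=
    Nat.mul_le_mul_right _ h16
  have h3 : 2 * (r * r) + 6 * (r * r) + 8 * r ≤ 6 * (r * r) + 6 * (k * r) + 2 * r := by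
    calc 2 * (r * r) + 6 * (r * r) + 8 * r = 8 * ((r + 1) * r) := by ring
      _ ≤ (2 * r) * (3 * (r + k) + 1) := hstep1.trans hstep2
      _ = 6 * (r * r) + 6 * (k * r) + 2 * r := by ring
  have h5 : 8 * (k * r) + r ≤ r * r := by
    calc 8 * (k * r) + r = (8 * k + 1) * r := by ring
      _ ≤ r * r := Nat.mul_le_mul_right r (by omega)
  have hr1 : 1 ≤ r := by omega
  clear hb hmul hstep1 hstep2 h16 hchoose2 hge hge' ht
  generalize hX : r * r = X at h3 h5
  generalize hZ : k * r = Z at h3 h5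
  clear hX hZ
  omega

end TemplatePaper
end
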